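/- arXiv:1308.2988 — 7 statements merged into one kernel-verified Lean document; each statement's English description precedes it below -/
import Mathlib

section
/- Let A be a finite set, π a probability distribution on A, and J a self-coupling of π (a probability distribution on A×A whose both marginals equal π). Then for any a ∈ A, replacing the values J(b,c) for b,c ≠ a by nearest multiples of 1/N and defining the remaining entries so that the marginals equal a given distribution π' with ‖π'−π‖_∞ < ε, yields a function J' : A×A → ℝ with values in (1/N)ℤ, with both marginals equal to π', satisfying ‖J'−J‖_∞ < 2|A|ε + |A|²/N; moreover if min_{a,b} J(a,b) > 2|A|ε + |A|²/N then J' is everywhere positive, hence a self-coupling of π'. -/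
set_option maxHeartbeats 1000000 in
theorem stmt0 {A : Type*} [Fintype A] [DecidableEq A] [Nonempty A]
    (π π' : A → ℝ) (J : A → A → ℝ) (ε : ℝ) (N : ℕ) (a : A)
    (hπ0 : ∀ b, 0 ≤ π b) (hπ1 : ∑ b, π b = 1)
    (hπ'0 : ∀ b, 0 ≤ π' b) (hπ'1 : ∑ b, π' b = 1)
    (hJ0 : ∀ b c, 0 ≤ J b c)
    (hJ1 : ∀ b, ∑ c, J b c = π b) (hJ2 : ∀ c, ∑ b, J b c = π c)
    (hεpos : 0 < ε) (hN : 0 < N)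
    (hclose : ∀ b, |π' b - π b| < ε)
    (hdyad : ∀ b, ∃ k : ℤ, π' b = (k : ℝ) / N) :
    ∃ J' : A → A → ℝ,
      (∀ b c, ∃ k : ℤ, J' b c = (k : ℝ) / N) ∧
      (∀ b, ∑ c, J' b c = π' b) ∧
      (∀ c, ∑ b, J' b c = π' c) ∧
      (∀ b c, |J' b c - J b c| < 2 * (Fintype.card A : ℝ) * ε + (Fintype.card A : ℝ) ^ 2 / N) ∧
      ((∀ b c, 2 * (Fintype.card A : ℝ) * ε + (Fintype.card A : ℝ) ^ 2 / N < J b c) →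
        ∀ b c, 0 < J' b c) := by
  classical
  set n : ℝ := (Fintype.card A : ℝ) with hn
  have hn1 : (1:ℝ) ≤ n := by
    have h : 1 ≤ Fintype.card A := Fintype.card_pos
    rw [hn]
    exact_mod_cast h
  have hNpos : (0:ℝ) < N := by exact_mod_cast hN
  have hNne : (N:ℝ) ≠ 0 := ne_of_gt hNpos
  set Rf : A → A → ℝ := fun b c => ((round ((N:ℝ) * J b c) : ℤ) : ℝ) / N with hRf
  set s := Finset.univ.erase a with hs
  have hcard : ((s.card : ℝ)) = n - 1 := by
    rw [hs, Finset.card_erase_of_mem (Finset.mem_univ a), Finset.card_univ]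
    have h1 : 1 ≤ Fintype.card A := Fintype.card_pos
    rw [Nat.cast_sub h1]
    simp [hn]
  have hRclose : ∀ b c, |Rf b c - J b c| ≤ 1 / (2*N) := by
    intro b c
    have heq : Rf b c - J b c = -(((N:ℝ) * J b c) - (round ((N:ℝ)*J b c) : ℝ))/N := by
      simp only [hRf]; field_simp; ring
    rw [heq, abs_div, abs_of_pos hNpos, abs_neg]
    calc |((N:ℝ) * J b c) - (round ((N:ℝ)*J b c) : ℝ)| / N ≤ (1/2)/N := by
          gcongr; exact abs_sub_round _
      _ = 1/(2*N) := by ring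
  set J' : A → A → ℝ := fun b c =>
    if b = a then
      (if c = a then π' a - ∑ c' ∈ s, (π' c' - ∑ b' ∈ s, Rf b' c')
       else π' c - ∑ b' ∈ s, Rf b' c)
    else
      (if c = a then π' b - ∑ c' ∈ s, Rf b c'
       else Rf b c) with hJ'
  have E1 : J' a a = π' a - ∑ c' ∈ s, (π' c' - ∑ b' ∈ s, Rf b' c') := by simp [hJ']
  have E2 : ∀ c, c ≠ a → J' a c = π' c - ∑ b' ∈ s, Rf b' c := fun c hc => by
    simp [hJ', hc]
  have E3 : ∀ b, b ≠ a → J' b a = π' b - ∑ c' ∈ s, Rf b c' := fun b hb => by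
    simp [hJ', hb]
  have E4 : ∀ b c, b ≠ a → c ≠ a → J' b c = Rf b c := fun b c hb hc => by
    simp [hJ', hb, hc]
  -- dyadic closure lemmas
  have hdsub : ∀ {x y : ℝ}, (∃ k:ℤ, x = (k:ℝ)/N) → (∃ k:ℤ, y = (k:ℝ)/N) →
      ∃ k:ℤ, x - y = (k:ℝ)/N := by
    rintro x y ⟨k, hk⟩ ⟨l, hl⟩
    exact ⟨k - l, by rw [hk, hl]; push_cast; ring⟩
  have hdsum : ∀ (t : Finset A) (f : A → ℝ), (∀ x ∈ t, ∃ k:ℤ, f x = (k:ℝ)/N) →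
      ∃ k:ℤ, ∑ x ∈ t, f x = (k:ℝ)/N := by
    intro t
    induction t using Finset.induction_on with
    | empty => intro f _; exact ⟨0, by simp⟩
    | @insert x t hx ih =>
      intro f hf
      obtain ⟨k, hk⟩ := hf _ (Finset.mem_insert_self _ _)
      obtain ⟨l, hl⟩ := ih f (fun x hxs => hf x (Finset.mem_insert_of_mem hxs))
      exact ⟨k + l, by rw [Finset.sum_insert hx, hk, hl]; push_cast; ring⟩
  have hRdy : ∀ b c, ∃ k:ℤ, Rf b c = (k:ℝ)/N := fun b c => ⟨round ((N:ℝ) * J b c), rfl⟩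
  have hdy : ∀ b c, ∃ k:ℤ, J' b c = (k:ℝ)/N := by
    intro b c
    by_cases hb : b = a <;> by_cases hc : c = a
    · rw [hb, hc, E1]
      exact hdsub (hdyad a) (hdsum s _ (fun c' _ =>
        hdsub (hdyad c') (hdsum s _ (fun b' _ => hRdy b' c'))))
    · rw [hb, E2 c hc]
      exact hdsub (hdyad c) (hdsum s _ (fun b' _ => hRdy b' c))
    · rw [hc, E3 b hb]
      exact hdsub (hdyad b) (hdsum s _ (fun c' _ => hRdy b c'))
    · rw [E4 b c hb hc]; exact hRdy b c
  -- marginal identities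
  have hrow : ∀ b, ∑ c, J' b c = π' b := by
    intro b
    rw [← Finset.add_sum_erase _ _ (Finset.mem_univ a), ← hs]
    by_cases hb : b = a
    · subst hb
      rw [E1, Finset.sum_congr rfl (fun c hc => E2 c (Finset.mem_erase.mp hc).1)]
      ring
    · rw [E3 b hb, Finset.sum_congr rfl (fun c hc => E4 b c hb (Finset.mem_erase.mp hc).1)]
      ring
  have hcol : ∀ c, ∑ b, J' b c = π' c := by
    intro c
    rw [← Finset.add_sum_erase _ _ (Finset.mem_univ a), ← hs]
    by_cases hc : c = a
    · subst hc
      rw [E1, Finset.sum_congr rfl (fun b hb => E3 b (Finset.mem_erase.mp hb).1),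
        Finset.sum_sub_distrib, Finset.sum_sub_distrib, Finset.sum_comm]
      ring
    · rw [E2 c hc, Finset.sum_congr rfl (fun b hb => E4 b c (Finset.mem_erase.mp hb).1 hc)]
      ring
  -- sum bound helper
  have hSb : ∀ (f : A → ℝ) (M : ℝ), (∀ x ∈ s, |f x| ≤ M) → |∑ x ∈ s, f x| ≤ (n-1) * M := by
    intro f M hf
    calc |∑ x ∈ s, f x| ≤ ∑ x ∈ s, |f x| := Finset.abs_sum_le_sum_abs _ _
      _ ≤ ∑ _x ∈ s, M := Finset.sum_le_sum hf
      _ = (s.card : ℝ) * M := by rw [Finset.sum_const, nsmul_eq_mul]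
      _ = (n-1) * M := by rw [hcard]
  have hJa_row : ∀ b, J b a = π b - ∑ c' ∈ s, J b c' := by
    intro b
    have h := hJ1 b
    rw [← Finset.add_sum_erase _ _ (Finset.mem_univ a), ← hs] at h
    linarith
  have hJa_col : ∀ c, J a c = π c - ∑ b' ∈ s, J b' c := by
    intro c
    have h := hJ2 c
    rw [← Finset.add_sum_erase _ _ (Finset.mem_univ a), ← hs] at h
    linarith
  have key2 : ∀ c, c ≠ a → |J' a c - J a c| ≤ ε + (n-1) * (1/(2*N)) := by
    intro c hc
    have heq : J' a c - J a c = (π' c - π c) - ∑ b' ∈ s, (Rf b' c - J b' c) := by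
      rw [E2 c hc, hJa_col c, Finset.sum_sub_distrib]; ring
    rw [heq]
    calc |(π' c - π c) - ∑ b' ∈ s, (Rf b' c - J b' c)|
        ≤ |π' c - π c| + |∑ b' ∈ s, (Rf b' c - J b' c)| := abs_sub _ _
      _ ≤ ε + (n-1) * (1/(2*N)) := by
          gcongr
          · exact le_of_lt (hclose c)
          · exact hSb _ _ (fun b' _ => hRclose b' c)
  have key3 : ∀ b, b ≠ a → |J' b a - J b a| ≤ ε + (n-1) * (1/(2*N)) := by
    intro b hb
    have heq : J' b a - J b a = (π' b - π b) - ∑ c' ∈ s, (Rf b c' - J b c') := by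
      rw [E3 b hb, hJa_row b, Finset.sum_sub_distrib]; ring
    rw [heq]
    calc |(π' b - π b) - ∑ c' ∈ s, (Rf b c' - J b c')|
        ≤ |π' b - π b| + |∑ c' ∈ s, (Rf b c' - J b c')| := abs_sub _ _
      _ ≤ ε + (n-1) * (1/(2*N)) := by
          gcongr
          · exact le_of_lt (hclose b)
          · exact hSb _ _ (fun c' _ => hRclose b c')
  have key4 : |J' a a - J a a| ≤ ε + (n-1) * (ε + (n-1) * (1/(2*N))) := by
    have hE1' : J' a a = π' a - ∑ c' ∈ s, J' a c' := by
      rw [E1, Finset.sum_congr rfl (fun c hc => (E2 c (Finset.mem_erase.mp hc).1).symm)]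
    have heq : J' a a - J a a = (π' a - π a) - ∑ c' ∈ s, (J' a c' - J a c') := by
      rw [hE1', hJa_row a, Finset.sum_sub_distrib]; ring
    rw [heq]
    calc |(π' a - π a) - ∑ c' ∈ s, (J' a c' - J a c')|
        ≤ |π' a - π a| + |∑ c' ∈ s, (J' a c' - J a c')| := abs_sub _ _
      _ ≤ ε + (n-1) * (ε + (n-1) * (1/(2*N))) := by
          gcongr
          · exact le_of_lt (hclose a)
          · exact hSb _ _ (fun c' hc' => key2 c' (Finset.mem_erase.mp hc').1)
  -- numeric comparisons
  have hn0 : (0:ℝ) < n := lt_of_lt_of_le one_pos hn1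
  have e1 : 1/(2*(N:ℝ)) < 2*n*ε + n^2/N := by
    have h1 : (1:ℝ)/(2*N) < n^2/N := by
      rw [div_lt_div_iff₀ (by positivity) hNpos]
      nlinarith [mul_pos hNpos (show (0:ℝ) < 2*n^2 - 1 by nlinarith [hn1])]
    nlinarith [mul_pos (mul_pos two_pos hn0) hεpos]
  have e2 : ε + (n-1) * (1/(2*(N:ℝ))) < 2*n*ε + n^2/N := by
    have h1 : (n-1) * (1/(2*(N:ℝ))) ≤ n^2/N := by
      rw [mul_one_div, div_le_div_iff₀ (by positivity) hNpos]
      nlinarith [mul_le_mul_of_nonneg_right (show n - 1 ≤ 2*n^2 by nlinarith [hn1, sq_nonneg (n-1)]) (le_of_lt hNpos)]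
    nlinarith
  have e3 : ε + (n-1) * (ε + (n-1) * (1/(2*(N:ℝ)))) < 2*n*ε + n^2/N := by
    have h1 : (n-1) * ((n-1) * (1/(2*(N:ℝ)))) ≤ n^2/N := by
      rw [mul_one_div, mul_div_assoc', div_le_div_iff₀ (by positivity) hNpos]
      nlinarith [mul_le_mul_of_nonneg_right (show (n-1) * (n-1) ≤ 2*n^2 by nlinarith [hn1]) (le_of_lt hNpos)]
    nlinarith
  have hbound : ∀ b c, |J' b c - J b c| < 2*n*ε + n^2/N := by
    intro b c
    by_cases hb : b = a <;> by_cases hc : c = a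
    · rw [hb, hc]; exact lt_of_le_of_lt key4 e3
    · rw [hb]; exact lt_of_le_of_lt (key2 c hc) e2
    · rw [hc]; exact lt_of_le_of_lt (key3 b hb) e2
    · rw [E4 b c hb hc]; exact lt_of_le_of_lt (hRclose b c) e1
  refine ⟨J', hdy, hrow, hcol, hbound, ?_⟩
  intro hmin b c
  have h1 := abs_lt.mp (hbound b c)
  have h2 := hmin b c
  linarith [h1.1]
end

section
/- Let A be a finite set, N ≥ 2, φ : {1,…,N} → A, and let τ : {1,…,N−1} → {2,…,N} be a bijection. Define the graph Γ(τ) with vertex set {1,…,N} and edge set {(i, τ(i)) : 1 ≤ i ≤ N−1}. If Γ(τ) has more than |A|² connected components, then there exist indices 1 ≤ i < j ≤ N−1 lying in different connected components of Γ(τ) with φ(i) = φ(j) and φ(τ(i)) = φ(τ(j)); swapping the values of τ at i and j yields a bijection τ' : {1,…,N−1} → {2,…,N} with the same empirical pair distribution as τ and such that Γ(τ') has one fewer connected component than Γ(τ). -/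
/-- The graph on `{1,…,N}` (encoded as `Fin N`) whose edges are the pairs `(i, τ i)`
for `i ∈ {1,…,N−1}` (encoded as the indices with `i.val < N - 1`). -/
def lineGraph {N : ℕ} (τ : Equiv.Perm (Fin N)) : SimpleGraph (Fin N) :=
  SimpleGraph.fromRel (fun i j => i.val < N - 1 ∧ τ i = j)

namespace StmtAux


/-- Generic induction principle for `SameCycle`. -/
lemma sameCycle_rec {α : Type*} [Finite α] {σ : Equiv.Perm α} (S : α → α → Prop)
    (hstep : ∀ u, S u (σ u)) (hrefl : ∀ u, S u u)
    (htrans : ∀ {a b c}, S a b → S b c → S a c)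
    {u v : α} (h : σ.SameCycle u v) : S u v := by
  have key : ∀ n : ℕ, S u ((σ ^ n) u) := by
    intro n
    induction n with
    | zero => simpa using hrefl u
    | succ m ih =>
      have hp : (σ ^ (m + 1)) u = σ ((σ ^ m) u) := by
        rw [pow_succ']; rfl
      rw [hp]
      exact htrans ih (hstep _)
  obtain ⟨n, -, rfl⟩ := h.exists_pow_eq'
  exact key n

lemma sameCycle_self {α : Type*} (σ : Equiv.Perm α) (u : α) : σ.SameCycle u (σ u) :=
  ⟨1, by simp⟩

/-- Merging of cycles by a transposition. -/
lemma key_merge {α : Type*} [DecidableEq α] [Fintype α] (τ : Equiv.Perm α) {i j : α}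
    (hij : ¬ τ.SameCycle i j) (u v : α) :
    (τ * Equiv.swap i j).SameCycle u v ↔
      τ.SameCycle u v ∨ (τ.SameCycle u i ∧ τ.SameCycle v j) ∨
        (τ.SameCycle u j ∧ τ.SameCycle v i) := by
  set τ' := τ * Equiv.swap i j with hτ'def
  have hne : i ≠ j := fun h => hij (h ▸ Equiv.Perm.SameCycle.refl τ i)
  have happ : ∀ x, x ≠ i → x ≠ j → τ' x = τ x := fun x h1 h2 => by
    simp [hτ'def, Equiv.Perm.mul_apply, Equiv.swap_apply_of_ne_of_ne h1 h2]
  have happi : τ' i = τ j := by simp [hτ'def, Equiv.Perm.mul_apply]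
  have happj : τ' j = τ i := by simp [hτ'def, Equiv.Perm.mul_apply]
  have p1 : τ'.SameCycle i j := by
    have hw : τ.SameCycle (τ j) j := (sameCycle_self τ j).symm
    obtain ⟨m, -, hm⟩ := hw.exists_pow_eq'
    have hex : ∃ n, (τ ^ n) (τ j) = j := ⟨m, hm⟩
    have hchain : ∀ t, t ≤ Nat.find hex → (τ' ^ t) (τ j) = (τ ^ t) (τ j) := by
      intro t
      induction t with
      | zero => simp
      | succ s ih =>
        intro hs
        have hsn : s < Nat.find hex := lt_of_lt_of_le (Nat.lt_succ_self s) hs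
        have ihs := ih hsn.le
        have hxj : (τ ^ s) (τ j) ≠ j := Nat.find_min hex hsn
        have hxi : (τ ^ s) (τ j) ≠ i := by
          intro h
          apply hij
          have h1 : τ.SameCycle (τ j) ((τ ^ s) (τ j)) := ⟨s, by rw [zpow_natCast]⟩
          exact h ▸ (h1.symm.trans hw)
        have e1 : (τ' ^ (s + 1)) (τ j) = τ' ((τ' ^ s) (τ j)) := by rw [pow_succ']; rfl
        have e2 : (τ ^ (s + 1)) (τ j) = τ ((τ ^ s) (τ j)) := by rw [pow_succ']; rfl
        rw [e1, e2, ihs, happ _ hxi hxj]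
    have hfin : (τ' ^ (Nat.find hex + 1)) i = j := by
      have e1 : (τ' ^ (Nat.find hex + 1)) i = (τ' ^ Nat.find hex) (τ' i) := by
        rw [pow_succ]; rfl
      rw [e1, happi, hchain _ le_rfl, Nat.find_spec hex]
    exact ⟨(Nat.find hex + 1 : ℕ), by rw [zpow_natCast]; exact hfin⟩
  have p2 : ∀ u, τ'.SameCycle u (τ u) := by
    intro u
    by_cases hui : u = i
    · subst hui
      rw [← happj]
      exact p1.trans (sameCycle_self τ' j)
    by_cases huj : u = j
    · subst huj
      rw [← happi]
      exact p1.symm.trans (sameCycle_self τ' i)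
    · rw [← happ u hui huj]
      exact sameCycle_self τ' u
  have p3 : ∀ {a b : α}, τ.SameCycle a b → τ'.SameCycle a b := fun {a b} h =>
    sameCycle_rec (fun x y => τ'.SameCycle x y) p2 (fun x => Equiv.Perm.SameCycle.refl τ' x)
      (fun hab hbc => hab.trans hbc) h
  constructor
  · intro h
    refine sameCycle_rec
      (S := fun a b => τ.SameCycle a b ∨ (τ.SameCycle a i ∧ τ.SameCycle b j) ∨
        (τ.SameCycle a j ∧ τ.SameCycle b i)) ?_ ?_ ?_ h
    · intro u
      by_cases hui : u = i
      · rw [hui, happi]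
        exact Or.inr (Or.inl ⟨Equiv.Perm.SameCycle.refl τ i, (sameCycle_self τ j).symm⟩)
      by_cases huj : u = j
      · rw [huj, happj]
        exact Or.inr (Or.inr ⟨Equiv.Perm.SameCycle.refl τ j, (sameCycle_self τ i).symm⟩)
      · rw [happ u hui huj]
        exact Or.inl (sameCycle_self τ u)
    · exact fun u => Or.inl (Equiv.Perm.SameCycle.refl τ u)
    · rintro a b c (hab | ⟨hai, hbj⟩ | ⟨haj, hbi⟩) (hbc | ⟨hbi', hcj⟩ | ⟨hbj', hci⟩)
      · exact Or.inl (hab.trans hbc)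
      · exact Or.inr (Or.inl ⟨hab.trans hbi', hcj⟩)
      · exact Or.inr (Or.inr ⟨hab.trans hbj', hci⟩)
      · exact Or.inr (Or.inl ⟨hai, hbc.symm.trans hbj⟩)
      · exact absurd (hbi'.symm.trans hbj) hij
      · exact Or.inl (hai.trans hci.symm)
      · exact Or.inr (Or.inr ⟨haj, hbc.symm.trans hbi⟩)
      · exact Or.inl (haj.trans hcj.symm)
      · exact absurd (hbi.symm.trans hbj') hij
  · rintro (h | ⟨hui, hvj⟩ | ⟨huj, hvi⟩)
    · exact p3 h
    · exact ((p3 hui).trans p1).trans (p3 hvj).symm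
    · exact ((p3 huj).trans p1.symm).trans (p3 hvi).symm

lemma reachable_iff_sameCycle {N : ℕ} (hN : 2 ≤ N) (τ : Equiv.Perm (Fin N))
    (hτ : ∀ i, (τ i).val = 0 ↔ i.val = N - 1) (u v : Fin N) :
    (lineGraph τ).Reachable u v ↔ τ.SameCycle u v := by
  set last : Fin N := ⟨N - 1, by omega⟩ with hlastdef
  have hval : ∀ x : Fin N, x ≠ last → x.val < N - 1 := by
    intro x hx
    have h1 : x.val < N := x.isLt
    have h2 : x.val ≠ N - 1 := fun h => hx (Fin.ext h)
    omega
  have step1 : ∀ x : Fin N, x ≠ last → (lineGraph τ).Reachable x (τ x) := by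
    intro x hx
    by_cases hfix : τ x = x
    · rw [hfix]
    · refine SimpleGraph.Adj.reachable ?_
      show (SimpleGraph.fromRel _).Adj x (τ x)
      rw [SimpleGraph.fromRel_adj]
      exact ⟨fun h => hfix h.symm, Or.inl ⟨hval x hx, rfl⟩⟩
  have step2 : (lineGraph τ).Reachable last (τ last) := by
    have hz : τ.SameCycle (τ last) last := (sameCycle_self τ last).symm
    obtain ⟨m, -, hm⟩ := hz.exists_pow_eq'
    have hex : ∃ t, (τ ^ t) (τ last) = last := ⟨m, hm⟩
    have hchain : ∀ t, t ≤ Nat.find hex →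
        (lineGraph τ).Reachable (τ last) ((τ ^ t) (τ last)) := by
      intro t
      induction t with
      | zero =>
        intro _
        rw [pow_zero, Equiv.Perm.one_apply]
      | succ s ih =>
        intro hs
        have hsn : s < Nat.find hex := lt_of_lt_of_le (Nat.lt_succ_self s) hs
        have h1 := ih hsn.le
        have hne : (τ ^ s) (τ last) ≠ last := Nat.find_min hex hsn
        have h2 := step1 _ hne
        have e1 : (τ ^ (s + 1)) (τ last) = τ ((τ ^ s) (τ last)) := by rw [pow_succ']; rfl
        rw [e1]
        exact h1.trans h2
    have h3 := hchain _ le_rfl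
    rw [Nat.find_spec hex] at h3
    exact h3.symm
  have step : ∀ x : Fin N, (lineGraph τ).Reachable x (τ x) := by
    intro x
    by_cases hx : x = last
    · rw [hx]; exact step2
    · exact step1 x hx
  constructor
  · intro h
    obtain ⟨p⟩ := h
    induction p with
    | nil => exact Equiv.Perm.SameCycle.refl τ _
    | cons hadj p ih =>
      refine Equiv.Perm.SameCycle.trans ?_ ih
      have hadj' := hadj
      simp only [_root_.lineGraph, SimpleGraph.fromRel_adj] at hadj'
      rcases hadj'.2 with ⟨-, h'⟩ | ⟨-, h'⟩
      · exact h' ▸ sameCycle_self τ _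
      · exact (h' ▸ sameCycle_self τ _).symm
  · intro h
    exact sameCycle_rec (fun a b => (lineGraph τ).Reachable a b) step
      (fun a => SimpleGraph.Reachable.refl a) (fun hab hbc => hab.trans hbc) h

lemma exists_good_rep {N : ℕ} (hN : 2 ≤ N) (τ : Equiv.Perm (Fin N))
    (hτ : ∀ i, (τ i).val = 0 ↔ i.val = N - 1)
    (c : (lineGraph τ).ConnectedComponent) :
    ∃ v : Fin N, v.val < N - 1 ∧ (lineGraph τ).connectedComponentMk v = c := by
  obtain ⟨v, rfl⟩ := Quot.exists_rep c
  by_cases hv : v.val < N - 1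
  · exact ⟨v, hv, rfl⟩
  · have hvlast : v.val = N - 1 := by have := v.isLt; omega
    set w : Fin N := τ⁻¹ v with hwdef
    have hτw : τ w = v := by rw [hwdef]; exact τ.apply_symm_apply v
    have hwval : w.val < N - 1 := by
      by_contra hw
      have hw1 : w.val = N - 1 := by have := w.isLt; omega
      have hwv : w = v := Fin.ext (by rw [hw1, hvlast])
      have h0 : (τ w).val = 0 := (hτ w).mpr hw1
      rw [hτw] at h0
      omega
    have hwv : w ≠ v := by
      intro h
      have := hτ w
      rw [hτw] at this
      have h0 : v.val = 0 := this.mpr (h ▸ hvlast)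
      omega
    have hadj : (lineGraph τ).Adj w v := by
      show (SimpleGraph.fromRel _).Adj w v
      rw [SimpleGraph.fromRel_adj]
      exact ⟨hwv, Or.inl ⟨hwval, hτw⟩⟩
    exact ⟨w, hwval, SimpleGraph.ConnectedComponent.sound hadj.reachable⟩

lemma card_merge {N : ℕ} (hN : 2 ≤ N) (τ : Equiv.Perm (Fin N))
    (hτ : ∀ i, (τ i).val = 0 ↔ i.val = N - 1) (i j : Fin N)
    (hτ' : ∀ i', ((τ * Equiv.swap i j) i').val = 0 ↔ i'.val = N - 1)
    (hnc : ¬ τ.SameCycle i j) :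
    Nat.card (lineGraph (τ * Equiv.swap i j)).ConnectedComponent
      = Nat.card (lineGraph τ).ConnectedComponent - 1 := by
  classical
  set τ' := τ * Equiv.swap i j with hτ'def
  have L := reachable_iff_sameCycle hN τ hτ
  have L' := reachable_iff_sameCycle hN τ' hτ'
  have key := key_merge τ hnc
  have hQfin : Finite (lineGraph τ).ConnectedComponent :=
    Finite.of_surjective (lineGraph τ).connectedComponentMk Quot.exists_rep
  have hQ'fin : Finite (lineGraph τ').ConnectedComponent :=
    Finite.of_surjective (lineGraph τ').connectedComponentMk Quot.exists_rep
  -- the lifted map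
  have hlift : ∀ (v w : Fin N) (p : (lineGraph τ).Walk v w), p.IsPath →
      (lineGraph τ').connectedComponentMk v = (lineGraph τ').connectedComponentMk w := by
    intro v w p _
    exact SimpleGraph.ConnectedComponent.eq.mpr
      ((L' v w).mpr ((key v w).mpr (Or.inl ((L v w).mp ⟨p⟩))))
  set f : (lineGraph τ).ConnectedComponent → (lineGraph τ').ConnectedComponent :=
    SimpleGraph.ConnectedComponent.lift
      (fun v => (lineGraph τ').connectedComponentMk v) hlift with hfdef
  have hfmk : ∀ v : Fin N, f ((lineGraph τ).connectedComponentMk v)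
      = (lineGraph τ').connectedComponentMk v := fun v => rfl
  set g : {c : (lineGraph τ).ConnectedComponent //
      c ≠ (lineGraph τ).connectedComponentMk j} → (lineGraph τ').ConnectedComponent :=
    fun c => f c.1 with hgdef
  have hmk_iff : ∀ u v : Fin N, (lineGraph τ).connectedComponentMk u
      = (lineGraph τ).connectedComponentMk v ↔ τ.SameCycle u v := by
    intro u v
    rw [SimpleGraph.ConnectedComponent.eq]
    exact L u v
  have hmk_iff' : ∀ u v : Fin N, (lineGraph τ').connectedComponentMk u
      = (lineGraph τ').connectedComponentMk v ↔ τ'.SameCycle u v := by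
    intro u v
    rw [SimpleGraph.ConnectedComponent.eq]
    exact L' u v
  have hg_bij : Function.Bijective g := by
    constructor
    · rintro ⟨c₁, h₁⟩ ⟨c₂, h₂⟩ h
      obtain ⟨u, rfl⟩ := Quot.exists_rep c₁
      obtain ⟨v, rfl⟩ := Quot.exists_rep c₂
      simp only [hgdef, hfmk] at h
      have h' := (key u v).mp ((hmk_iff' u v).mp h)
      refine Subtype.ext ?_
      rcases h' with h' | ⟨-, hvj⟩ | ⟨huj, -⟩
      · exact (hmk_iff u v).mpr h'
      · exact absurd ((hmk_iff v j).mpr hvj) h₂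
      · exact absurd ((hmk_iff u j).mpr huj) h₁
    · intro c'
      obtain ⟨v, rfl⟩ := Quot.exists_rep c'
      by_cases hvj : τ.SameCycle v j
      · refine ⟨⟨(lineGraph τ).connectedComponentMk i, ?_⟩, ?_⟩
        · intro h
          exact hnc ((hmk_iff i j).mp h)
        · show f _ = _
          rw [hfmk]
          exact (hmk_iff' i v).mpr
            ((key i v).mpr (Or.inr (Or.inl ⟨Equiv.Perm.SameCycle.refl τ i, hvj⟩)))
      · exact ⟨⟨(lineGraph τ).connectedComponentMk v,
          fun h => hvj ((hmk_iff v j).mp h)⟩, rfl⟩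
  have h1 : Nat.card {c : (lineGraph τ).ConnectedComponent //
      c ≠ (lineGraph τ).connectedComponentMk j}
      = Nat.card (lineGraph τ').ConnectedComponent :=
    Nat.card_eq_of_bijective g hg_bij
  have h2 : Nat.card (lineGraph τ).ConnectedComponent
      = Nat.card {c : (lineGraph τ).ConnectedComponent //
        c ≠ (lineGraph τ).connectedComponentMk j} + 1 := by
    calc Nat.card (lineGraph τ).ConnectedComponent
        = Nat.card (Option {c : (lineGraph τ).ConnectedComponent //
            c ≠ (lineGraph τ).connectedComponentMk j}) :=
          Nat.card_congr (Equiv.optionSubtypeNe ((lineGraph τ).connectedComponentMk j)).symm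
      _ = _ := Finite.card_option
  omega

end StmtAux

theorem stmt2 {A : Type*} [Fintype A] [DecidableEq A]
    (N : ℕ) (hN : 2 ≤ N) (φ : Fin N → A) (τ : Equiv.Perm (Fin N))
    (hτ : ∀ i, (τ i).val = 0 ↔ i.val = N - 1)
    (hcomp : (Fintype.card A) ^ 2 < Nat.card (lineGraph τ).ConnectedComponent) :
    ∃ i j : Fin N, i.val < j.val ∧ j.val < N - 1 ∧
      (lineGraph τ).connectedComponentMk i ≠ (lineGraph τ).connectedComponentMk j ∧
      φ i = φ j ∧ φ (τ i) = φ (τ j) ∧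
      (∀ i', ((τ * Equiv.swap i j) i').val = 0 ↔ i'.val = N - 1) ∧
      (∀ a b,
        (Finset.univ.filter
          (fun k : Fin N => k.val < N - 1 ∧ φ k = a ∧ φ ((τ * Equiv.swap i j) k) = b)).card
        = (Finset.univ.filter
          (fun k : Fin N => k.val < N - 1 ∧ φ k = a ∧ φ (τ k) = b)).card) ∧
      Nat.card (lineGraph (τ * Equiv.swap i j)).ConnectedComponent
        = Nat.card (lineGraph τ).ConnectedComponent - 1 := by
  classical
  have hmk_iff : ∀ u v : Fin N, (lineGraph τ).connectedComponentMk u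
      = (lineGraph τ).connectedComponentMk v ↔ τ.SameCycle u v := by
    intro u v
    rw [SimpleGraph.ConnectedComponent.eq]
    exact StmtAux.reachable_iff_sameCycle hN τ hτ u v
  have main : ∃ i j : Fin N, i.val < j.val ∧ j.val < N - 1 ∧
      (lineGraph τ).connectedComponentMk i ≠ (lineGraph τ).connectedComponentMk j ∧
      φ i = φ j ∧ φ (τ i) = φ (τ j) := by
    have hQfin : Finite (lineGraph τ).ConnectedComponent :=
      Finite.of_surjective (lineGraph τ).connectedComponentMk Quot.exists_rep
    have hQft : Fintype (lineGraph τ).ConnectedComponent := Fintype.ofFinite _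
    choose rep hrep1 hrep2 using fun c => StmtAux.exists_good_rep hN τ hτ c
    have hc2 : Fintype.card (A × A) = Fintype.card A ^ 2 := by
      rw [Fintype.card_prod]
      exact (pow_two _).symm
    have hqc : Nat.card ((lineGraph τ).ConnectedComponent)
        = Fintype.card ((lineGraph τ).ConnectedComponent) := Nat.card_eq_fintype_card
    have hcard : Fintype.card (A × A) < Fintype.card (lineGraph τ).ConnectedComponent := by
      rw [hc2, ← hqc]
      exact hcomp
    obtain ⟨c₁, c₂, hcne, hceq⟩ := Fintype.exists_ne_map_eq_of_card_lt
      (fun c : (lineGraph τ).ConnectedComponent => (φ (rep c), φ (τ (rep c)))) hcard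
    have hφ1 : φ (rep c₁) = φ (rep c₂) := congrArg Prod.fst hceq
    have hφ2 : φ (τ (rep c₁)) = φ (τ (rep c₂)) := congrArg Prod.snd hceq
    have hmkne : (lineGraph τ).connectedComponentMk (rep c₁)
        ≠ (lineGraph τ).connectedComponentMk (rep c₂) := by
      rw [hrep2, hrep2]
      exact hcne
    have hvne : (rep c₁).val ≠ (rep c₂).val := by
      intro h
      exact hmkne (congrArg _ (Fin.ext h))
    rcases hvne.lt_or_gt with h | h
    · exact ⟨rep c₁, rep c₂, h, hrep1 c₂, hmkne, hφ1, hφ2⟩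
    · exact ⟨rep c₂, rep c₁, h, hrep1 c₁, hmkne.symm, hφ1.symm, hφ2.symm⟩
  obtain ⟨i, j, hlt, hjlt, hmkne, hφ, hφτ⟩ := main
  have hilt : i.val < N - 1 := lt_trans hlt hjlt
  have hki' : i ≠ j := Fin.ne_of_val_ne (Nat.ne_of_lt hlt)
  have heqi : (τ * Equiv.swap i j) i = τ j := by
    simp [Equiv.Perm.mul_apply]
  have heqj : (τ * Equiv.swap i j) j = τ i := by
    simp [Equiv.Perm.mul_apply]
  have heqo : ∀ k, k ≠ i → k ≠ j → (τ * Equiv.swap i j) k = τ k := by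
    intro k h1 h2
    simp [Equiv.Perm.mul_apply, Equiv.swap_apply_of_ne_of_ne h1 h2]
  have hτ'new : ∀ i', ((τ * Equiv.swap i j) i').val = 0 ↔ i'.val = N - 1 := by
    intro k
    rcases eq_or_ne k i with rfl | hki
    · rw [heqi, hτ j]
      constructor <;> intro h <;> omega
    rcases eq_or_ne k j with rfl | hkj
    · rw [heqj, hτ i]
      constructor <;> intro h <;> omega
    · rw [heqo k hki hkj, hτ k]
  have hφswap : ∀ k, φ ((τ * Equiv.swap i j) k) = φ (τ k) := by
    intro k
    rcases eq_or_ne k i with rfl | hki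
    · rw [heqi]
      exact hφτ.symm
    rcases eq_or_ne k j with rfl | hkj
    · rw [heqj]
      exact hφτ
    · rw [heqo k hki hkj]
  refine ⟨i, j, hlt, hjlt, hmkne, hφ, hφτ, hτ'new, ?_, ?_⟩
  · intro a b
    congr 1
    ext k
    simp only [Finset.mem_filter, hφswap]
  · exact StmtAux.card_merge hN τ hτ i j hτ'new (fun h => hmkne ((hmk_iff i j).mpr h))
end

section
/- Let A be a finite set, N ≥ 2, φ : {1,…,N} → A, and τ : {1,…,N−1} → {2,…,N} a bijection such that the graph Γ(τ) on vertices {1,…,N} with edges {(i,τ(i))} has k ≤ |A|² connected components. Then there exists a bijection σ : {1,…,N−1} → {2,…,N} such that Γ(σ) is connected, and the empirical distributions J_σ and J_τ of the maps i ↦ (φ(i),φ(σ(i))) and i ↦ (φ(i),φ(τ(i))) satisfy ‖J_σ − J_τ‖_∞ ≤ |A|²/N. -/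
open Equiv Equiv.Perm Finset in
/-- Connectivity of the line graph of a permutation consisting of a single cycle that
sends `N-1` to `0`. -/
lemma conn_of_sameCycle {N : ℕ} (hN : 2 ≤ N) (σ : Equiv.Perm (Fin N))
    (hσlast : σ ⟨N - 1, by omega⟩ = ⟨0, by omega⟩)
    (hall : ∀ x y, σ.SameCycle x y) : (lineGraph σ).Connected := by
  classical
  set last : Fin N := ⟨N - 1, by omega⟩ with hlastdef
  set zero : Fin N := ⟨0, by omega⟩ with hzerodef
  have h0ne : zero ≠ last := by
    intro h
    have := congrArg Fin.val h
    simp [hzerodef, hlastdef] at this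
    omega
  have hnofix : ∀ i, σ i ≠ i := by
    intro i h
    have e1 : i = zero := (hall i zero).eq_of_left h
    have e2 : i = last := (hall i last).eq_of_left h
    exact h0ne (e1 ▸ e2 ▸ rfl)
  have hex : ∃ t, 0 < t ∧ (σ ^ t) zero = zero :=
    ⟨orderOf σ, orderOf_pos σ, by rw [pow_orderOf_eq_one]; rfl⟩
  set m0 := Nat.find hex with hm0def
  obtain ⟨hm0pos, hm0per⟩ := Nat.find_spec hex
  have hmin : ∀ t, t < m0 → ¬(0 < t ∧ (σ ^ t) zero = zero) := fun t ht => Nat.find_min hex ht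
  have hper : ∀ s, (σ ^ (m0 * s)) zero = zero := by
    intro s
    induction s with
    | zero => simp
    | succ s ih =>
      have : m0 * (s + 1) = m0 * s + m0 := by ring
      rw [this, pow_add, Equiv.Perm.mul_apply, hm0per, ih]
  have horbit : ∀ j, ∃ t, t < m0 ∧ (σ ^ t) zero = j := by
    intro j
    obtain ⟨t0, _, ht0⟩ := (hall zero j).exists_pow_eq'
    refine ⟨t0 % m0, Nat.mod_lt _ hm0pos, ?_⟩
    have : (σ ^ t0) zero = (σ ^ (t0 % m0 + m0 * (t0 / m0))) zero := by
      rw [Nat.mod_add_div]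
    rw [← ht0, this, pow_add, Equiv.Perm.mul_apply, hper]
  have hlast_idx : ∀ s, s + 1 < m0 → (σ ^ s) zero ≠ last := by
    intro s hs hc
    have h1 : (σ ^ (s + 1)) zero = zero := by
      rw [pow_succ', Equiv.Perm.mul_apply, hc, hσlast]
    exact hmin (s + 1) hs ⟨Nat.succ_pos s, h1⟩
  have hreach0 : ∀ t, t < m0 → (lineGraph σ).Reachable zero ((σ ^ t) zero) := by
    intro t
    induction t with
    | zero => intro _; simpa using SimpleGraph.Reachable.refl zero
    | succ t ih =>
      intro h
      have hr := ih (by omega)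
      have hnl : (σ ^ t) zero ≠ last := hlast_idx t h
      have hadj : (lineGraph σ).Adj ((σ ^ t) zero) ((σ ^ (t + 1)) zero) := by
        have hst : (σ ^ (t + 1)) zero = σ ((σ ^ t) zero) := by
          rw [pow_succ', Equiv.Perm.mul_apply]
        rw [lineGraph, SimpleGraph.fromRel_adj, hst]
        refine ⟨(hnofix _).symm, Or.inl ⟨?_, rfl⟩⟩
        have := ((σ ^ t) zero).isLt
        have hne : ((σ ^ t) zero).val ≠ N - 1 := by
          intro hc
          exact hnl (Fin.ext (by simpa [hlastdef] using hc))
        omega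
      exact hr.trans hadj.reachable
  have hnon : Nonempty (Fin N) := ⟨zero⟩
  refine ⟨fun u v => ?_⟩
  obtain ⟨t, htl, ht⟩ := horbit u
  obtain ⟨s, hsl, hs⟩ := horbit v
  exact (ht ▸ hreach0 t htl).symm.trans (hs ▸ hreach0 s hsl)

open Equiv Equiv.Perm Finset Fin.NatCast Fin.CommRing in
theorem stmt3 {A : Type*} [Fintype A] [DecidableEq A]
    (N : ℕ) (hN : 2 ≤ N) (φ : Fin N → A) (τ : Equiv.Perm (Fin N))
    (hτ : ∀ i, (τ i).val = 0 ↔ i.val = N - 1)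
    (hcomp : Nat.card (lineGraph τ).ConnectedComponent ≤ (Fintype.card A) ^ 2) :
    ∃ σ : Equiv.Perm (Fin N),
      (∀ i, (σ i).val = 0 ↔ i.val = N - 1) ∧
      (lineGraph σ).Connected ∧
      ∀ a b,
        |((Finset.univ.filter
            (fun k : Fin N => k.val < N - 1 ∧ φ k = a ∧ φ (σ k) = b)).card : ℝ) / ((N : ℝ) - 1)
         - ((Finset.univ.filter
            (fun k : Fin N => k.val < N - 1 ∧ φ k = a ∧ φ (τ k) = b)).card : ℝ) / ((N : ℝ) - 1)|
        ≤ (Fintype.card A : ℝ) ^ 2 / N := by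
  classical
  set last : Fin N := ⟨N - 1, by omega⟩ with hlastdef
  set zero : Fin N := ⟨0, by omega⟩ with hzerodef
  have h0ne : zero ≠ last := by
    intro h
    have := congrArg Fin.val h
    simp [hzerodef, hlastdef] at this
    omega
  have hτlast : τ last = zero := by
    apply Fin.ext
    simpa [hzerodef] using (hτ last).mpr rfl
  -- the quotient by the same-cycle relation of τ
  set mku : Fin N → Quot τ.SameCycle := Quot.mk τ.SameCycle with hmkudef
  have hsound : ∀ {x y : Fin N}, τ.SameCycle x y → mku x = mku y := fun h => Quot.sound h
  have hexact : ∀ {x y : Fin N}, mku x = mku y → τ.SameCycle x y := by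
    intro x y h
    exact (Equiv.Perm.SameCycle.equivalence τ).eqvGen_iff.mp (Quot.eqvGen_exact h)
  have hmkτ : ∀ x, mku (τ x) = mku x :=
    fun x => hsound (Equiv.Perm.sameCycle_apply_left.mpr (Equiv.Perm.SameCycle.refl τ x))
  -- Reachability in the line graph implies being on the same cycle
  have hreach_sc : ∀ u v : Fin N, (lineGraph τ).Reachable u v → τ.SameCycle u v := by
    intro u v h
    obtain ⟨w⟩ := h
    induction w with
    | nil => exact Equiv.Perm.SameCycle.refl _ _
    | cons h p ih =>
      refine Equiv.Perm.SameCycle.trans ?_ ih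
      rw [lineGraph, SimpleGraph.fromRel_adj] at h
      obtain ⟨hne, h | h⟩ := h
      · exact ⟨1, by simpa using h.2⟩
      · exact (show τ.SameCycle _ _ from ⟨1, by simpa using h.2⟩).symm
  -- the number of cycles is at most the number of connected components
  haveI : Fintype (Quot τ.SameCycle) := Fintype.ofFinite _
  set k' := Fintype.card (Quot τ.SameCycle) with hk'def
  have hk'pos : 0 < k' := Fintype.card_pos_iff.mpr ⟨mku zero⟩
  have hk2 : k' ≤ (Fintype.card A) ^ 2 := by
    refine le_trans ?_ hcomp
    rw [hk'def, ← Nat.card_eq_fintype_card]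
    exact Nat.card_le_card_of_surjective
      (SimpleGraph.ConnectedComponent.lift mku
        (fun v w p _ => hsound (hreach_sc v w ⟨p⟩)))
      (by
        intro q
        obtain ⟨x, rfl⟩ := Quot.mk_surjective q
        exact ⟨(lineGraph τ).connectedComponentMk x, rfl⟩)
  -- indexing of the cycles and the cyclic shift on them
  obtain ⟨m, hm⟩ : ∃ m, k' = m + 1 := ⟨k' - 1, by omega⟩
  have e : Quot τ.SameCycle ≃ Fin (m + 1) := Fintype.equivFinOfCardEq hm
  set shift : Quot τ.SameCycle ≃ Quot τ.SameCycle :=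
    e.trans ((Equiv.addRight (1 : Fin (m + 1))).trans e.symm) with hshiftdef
  have hshift_e : ∀ q, e (shift q) = e q + 1 := by
    intro q; simp [hshiftdef]
  have hshift_iter : ∀ (t : ℕ) q, e (shift^[t] q) = e q + (t : Fin (m + 1)) := by
    intro t
    induction t with
    | zero => intro q; simp
    | succ t ih =>
      intro q
      rw [Function.iterate_succ_apply', hshift_e, ih]
      push_cast
      ring
  have hshift_surj : ∀ q q', ∃ t : ℕ, shift^[t] q = q' := by
    intro q q'
    refine ⟨(e q' - e q).val, e.injective ?_⟩
    rw [hshift_iter, Fin.cast_val_eq_self]; ring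
  -- representatives
  set rep : Quot τ.SameCycle → Fin N :=
    fun q => if q = mku last then zero else q.out with hrepdef
  have hmk0 : mku zero = mku last := (hsound (show τ.SameCycle last zero from ⟨1, by simp [hτlast]⟩)).symm
  have hrep_mk : ∀ q, mku (rep q) = q := by
    intro q
    by_cases h : q = mku last
    · simp [hrepdef, h, hmk0]
    · simp only [hrepdef, h, if_false]; exact Quot.out_eq q
  have hrep_ne_last : ∀ q, rep q ≠ last := by
    intro q h
    by_cases hq : q = mku last
    · exact h0ne (by simpa [hrepdef, hq] using h)
    · rw [hrepdef] at h
      simp only [hq, if_false] at h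
      exact hq (by rw [← Quot.out_eq q, ← hmkudef, h])
  -- the permutation π cyclically shifting the representatives
  set p : Fin N → Fin N :=
    fun i => if i = rep (mku i) then rep (shift (mku i)) else i with hpdef
  set p' : Fin N → Fin N :=
    fun i => if i = rep (mku i) then rep (shift.symm (mku i)) else i with hp'def
  have hp_rep : ∀ q, p (rep q) = rep (shift q) := by
    intro q; simp [hpdef, hrep_mk]
  have hp'_rep : ∀ q, p' (rep q) = rep (shift.symm q) := by
    intro q; simp [hp'def, hrep_mk]
  have hp_nonrep : ∀ i, i ≠ rep (mku i) → p i = i := by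
    intro i h; simp [hpdef, h]
  have hp'_nonrep : ∀ i, i ≠ rep (mku i) → p' i = i := by
    intro i h; simp [hp'def, h]
  have hrepcase : ∀ i, i = rep (mku i) → ∃ q, i = rep q := fun i h => ⟨mku i, h⟩
  have hp'_p : ∀ i, p' (p i) = i := by
    intro i
    by_cases h : i = rep (mku i)
    · rw [h, hp_rep, hp'_rep, Equiv.symm_apply_apply]
    · rw [hp_nonrep i h, hp'_nonrep i h]
  have hp_p' : ∀ i, p (p' i) = i := by
    intro i
    by_cases h : i = rep (mku i)
    · rw [h, hp'_rep, hp_rep, Equiv.apply_symm_apply]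
    · rw [hp'_nonrep i h, hp_nonrep i h]
  set π : Equiv.Perm (Fin N) := ⟨p, p', hp'_p, hp_p'⟩ with hπdef
  set σ : Equiv.Perm (Fin N) := π.trans τ with hσdef
  have hσapp : ∀ i, σ i = τ (p i) := fun i => rfl
  have hrep_mku_last : rep (mku last) = zero := by simp [hrepdef]
  have hp_last : p last = last := by
    apply hp_nonrep
    rw [hrep_mku_last]
    exact fun h => h0ne h.symm
  -- first property
  have prop1 : ∀ i, (σ i).val = 0 ↔ i.val = N - 1 := by
    intro i
    rw [hσapp, hτ (p i)]
    constructor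
    · intro h
      have hpl : p i = last := Fin.ext (by simpa [hlastdef] using h)
      by_cases hri : i = rep (mku i)
      · rw [hri, hp_rep] at hpl
        exact absurd hpl (hrep_ne_last _)
      · rw [hp_nonrep i hri] at hpl
        simp [hpl, hlastdef]
    · intro h
      have : i = last := Fin.ext (by simpa [hlastdef] using h)
      rw [this, hp_last]
  have hσlast : σ last = zero := by rw [hσapp, hp_last, hτlast]
  -- σ consists of a single cycle
  have hmk_pow : ∀ (n : ℕ) (x : Fin N), mku ((τ ^ n) x) = mku x := by
    intro n x
    exact hsound (Equiv.Perm.sameCycle_pow_left.mpr (Equiv.Perm.SameCycle.refl τ x))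
  have hCpow : ∀ (q : Quot τ.SameCycle) (n : ℕ),
      σ.SameCycle (τ (rep q)) ((τ ^ n) (τ (rep q))) := by
    intro q n
    induction n with
    | zero => simpa using Equiv.Perm.SameCycle.refl σ _
    | succ n ih =>
      have hstep : (τ ^ (n + 1)) (τ (rep q)) = τ ((τ ^ n) (τ (rep q))) := by
        rw [pow_succ', Equiv.Perm.mul_apply]
      rw [hstep]
      set y := (τ ^ n) (τ (rep q)) with hydef
      by_cases hy : y = rep (mku y)
      · have hmky : mku y = q := by rw [hydef, hmk_pow, hmkτ, hrep_mk]
        rw [hmky] at hy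
        rw [hy]
      · refine ih.trans ?_
        have : σ y = τ y := by rw [hσapp, hp_nonrep y hy]
        exact ⟨1, by simpa using this⟩
  have hCall : ∀ x, σ.SameCycle (τ (rep (mku x))) x := by
    intro x
    have hsc : τ.SameCycle (τ (rep (mku x))) x := hexact (by rw [hmkτ, hrep_mk])
    obtain ⟨n, _, hn⟩ := hsc.exists_pow_eq'
    have := hCpow (mku x) n
    rwa [hn] at this
  have hD : ∀ q, σ.SameCycle (τ (rep q)) (τ (rep (shift q))) := by
    intro q
    have h1 : σ.SameCycle (τ (rep q)) (rep q) := by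
      have := hCall (rep q)
      rwa [hrep_mk] at this
    refine h1.trans ?_
    have h2 : σ (rep q) = τ (rep (shift q)) := by rw [hσapp, hp_rep]
    exact ⟨1, by simpa using h2⟩
  have hE : ∀ (t : ℕ) (q : Quot τ.SameCycle),
      σ.SameCycle (τ (rep q)) (τ (rep (shift^[t] q))) := by
    intro t
    induction t with
    | zero => intro q; exact Equiv.Perm.SameCycle.refl σ _
    | succ t ih =>
      intro q
      rw [Function.iterate_succ_apply']
      exact (ih q).trans (hD _)
  have hall : ∀ x y, σ.SameCycle x y := by
    intro x y
    obtain ⟨t, ht⟩ := hshift_surj (mku x) (mku y)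
    have h1 : σ.SameCycle (τ (rep (mku x))) (τ (rep (mku y))) := ht ▸ hE t (mku x)
    exact ((hCall x).symm.trans h1).trans (hCall y)
  have prop2 : (lineGraph σ).Connected := conn_of_sameCycle hN σ hσlast hall
  refine ⟨σ, prop1, prop2, ?_⟩
  intro a b
  have hp_rep' : ∀ i, i = rep (mku i) → p i = rep (shift (mku i)) := by
    intro i h
    simp only [hpdef]
    rw [if_pos h]
  set Fσ := univ.filter (fun k : Fin N => k.val < N - 1 ∧ φ k = a ∧ φ (σ k) = b) with hFσdef
  set Fτ := univ.filter (fun k : Fin N => k.val < N - 1 ∧ φ k = a ∧ φ (τ k) = b) with hFτdef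
  set Aq := (univ : Finset (Quot τ.SameCycle)).filter
      (fun q => φ (rep q) = a ∧ φ (τ (rep (shift q))) = b) with hAqdef
  set Bq := (univ : Finset (Quot τ.SameCycle)).filter
      (fun q => φ (rep q) = a ∧ φ (τ (rep q)) = b) with hBqdef
  have hsplitσ : (Fσ.filter (fun i => i = rep (mku i))).card
      + (Fσ.filter (fun i => ¬ i = rep (mku i))).card = Fσ.card :=
    Finset.card_filter_add_card_filter_not (fun i => i = rep (mku i))
  have hsplitτ : (Fτ.filter (fun i => i = rep (mku i))).card
      + (Fτ.filter (fun i => ¬ i = rep (mku i))).card = Fτ.card :=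
    Finset.card_filter_add_card_filter_not (fun i => i = rep (mku i))
  have hneq : Fσ.filter (fun i => ¬ i = rep (mku i)) = Fτ.filter (fun i => ¬ i = rep (mku i)) := by
    ext i
    simp only [hFσdef, hFτdef, Finset.filter_filter, Finset.mem_filter, Finset.mem_univ, true_and]
    constructor
    · rintro ⟨⟨h1, h2, h3⟩, h4⟩
      rw [hσapp, hp_nonrep i h4] at h3
      exact ⟨⟨h1, h2, h3⟩, h4⟩
    · rintro ⟨⟨h1, h2, h3⟩, h4⟩
      exact ⟨⟨h1, h2, by rw [hσapp, hp_nonrep i h4]; exact h3⟩, h4⟩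
  have hneqcard : (Fσ.filter (fun i => ¬ i = rep (mku i))).card
      = (Fτ.filter (fun i => ¬ i = rep (mku i))).card := by rw [hneq]
  have hvallt : ∀ q : Quot τ.SameCycle, (rep q).val < N - 1 := by
    intro q
    have h1 := (rep q).isLt
    have h2 : (rep q).val ≠ N - 1 := fun hc =>
      hrep_ne_last q (Fin.ext (by simpa [hlastdef] using hc))
    omega
  have hcardA : (Fσ.filter (fun i => i = rep (mku i))).card = Aq.card := by
    refine Finset.card_bij (fun i _ => mku i) ?_ ?_ ?_
    · intro i hi
      simp only [hFσdef, Finset.filter_filter, Finset.mem_filter, Finset.mem_univ,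
        true_and] at hi
      obtain ⟨⟨h1, h2, h3⟩, h4⟩ := hi
      rw [hσapp, hp_rep' i h4] at h3
      simp only [hAqdef, Finset.mem_filter, Finset.mem_univ, true_and]
      exact ⟨by rw [← h4]; exact h2, h3⟩
    · intro i hi j hj hij
      have hij' : mku i = mku j := hij
      simp only [hFσdef, Finset.filter_filter, Finset.mem_filter] at hi hj
      rw [hi.2.2, hij', ← hj.2.2]
    · intro q hq
      simp only [hAqdef, Finset.mem_filter, Finset.mem_univ, true_and] at hq
      refine ⟨rep q, ?_, hrep_mk q⟩
      simp only [hFσdef, Finset.filter_filter, Finset.mem_filter, Finset.mem_univ, true_and]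
      refine ⟨⟨hvallt q, hq.1, ?_⟩, by rw [hrep_mk]⟩
      rw [hσapp, hp_rep' (rep q) (by rw [hrep_mk]), hrep_mk]
      exact hq.2
  have hcardB : (Fτ.filter (fun i => i = rep (mku i))).card = Bq.card := by
    refine Finset.card_bij (fun i _ => mku i) ?_ ?_ ?_
    · intro i hi
      simp only [hFτdef, Finset.filter_filter, Finset.mem_filter, Finset.mem_univ,
        true_and] at hi
      obtain ⟨⟨h1, h2, h3⟩, h4⟩ := hi
      simp only [hBqdef, Finset.mem_filter, Finset.mem_univ, true_and]
      exact ⟨by rw [← h4]; exact h2, by rw [← h4]; exact h3⟩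
    · intro i hi j hj hij
      have hij' : mku i = mku j := hij
      simp only [hFτdef, Finset.filter_filter, Finset.mem_filter] at hi hj
      rw [hi.2.2, hij', ← hj.2.2]
    · intro q hq
      simp only [hBqdef, Finset.mem_filter, Finset.mem_univ, true_and] at hq
      refine ⟨rep q, ?_, hrep_mk q⟩
      simp only [hFτdef, Finset.filter_filter, Finset.mem_filter, Finset.mem_univ, true_and]
      exact ⟨⟨hvallt q, hq.1, hq.2⟩, by rw [hrep_mk]⟩
  have hdiffeq : (Fσ.card : ℤ) - Fτ.card = (Aq.card : ℤ) - Bq.card := by omega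
  have hAqle : Aq.card ≤ k' := by
    have := Finset.card_le_univ Aq
    rwa [← hk'def] at this
  have hBqle : Bq.card ≤ k' := by
    have := Finset.card_le_univ Bq
    rwa [← hk'def] at this
  have hup : (Aq.card : ℤ) - Bq.card ≤ (k' : ℤ) - 1 := by
    by_cases hA : Aq.card = k'
    · have hAuniv : Aq = univ := Finset.eq_univ_of_card _ (by rw [hA, hk'def])
      have hBuniv : Bq = univ := by
        rw [Finset.eq_univ_iff_forall]
        intro q
        have h1 := Finset.mem_filter.mp ((Finset.eq_univ_iff_forall.mp hAuniv) q)
        have h2 := Finset.mem_filter.mp ((Finset.eq_univ_iff_forall.mp hAuniv) (shift.symm q))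
        rw [hBqdef, Finset.mem_filter]
        refine ⟨Finset.mem_univ _, h1.2.1, ?_⟩
        have h3 := h2.2.2
        rwa [Equiv.apply_symm_apply] at h3
      have hB : Bq.card = k' := by rw [hBuniv, Finset.card_univ, ← hk'def]
      omega
    · omega
  have hdown : (Bq.card : ℤ) - Aq.card ≤ (k' : ℤ) - 1 := by
    by_cases hB : Bq.card = k'
    · have hBuniv : Bq = univ := Finset.eq_univ_of_card _ (by rw [hB, hk'def])
      have hAuniv : Aq = univ := by
        rw [Finset.eq_univ_iff_forall]
        intro q
        have h1 := Finset.mem_filter.mp ((Finset.eq_univ_iff_forall.mp hBuniv) q)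
        have h2 := Finset.mem_filter.mp ((Finset.eq_univ_iff_forall.mp hBuniv) (shift q))
        rw [hAqdef, Finset.mem_filter]
        exact ⟨Finset.mem_univ _, h1.2.1, h2.2.2⟩
      have hA : Aq.card = k' := by rw [hAuniv, Finset.card_univ, ← hk'def]
      omega
    · omega
  -- final arithmetic
  have hN1 : (0:ℝ) < (N : ℝ) - 1 := by
    have : (2:ℝ) ≤ (N : ℝ) := by exact_mod_cast hN
    linarith
  have hNpos : (0:ℝ) < (N : ℝ) := by linarith
  rw [div_sub_div_same, abs_div, abs_of_pos hN1, div_le_div_iff₀ hN1 hNpos]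
  rcases le_or_gt ((Fintype.card A) ^ 2) N with hMN | hMN
  · have hu' : ((Fσ.card : ℤ) - Fτ.card) ≤ (k' : ℤ) - 1 := by omega
    have hd' : ((Fτ.card : ℤ) - Fσ.card) ≤ (k' : ℤ) - 1 := by omega
    have habs : |(Fσ.card : ℝ) - Fτ.card| ≤ (k' : ℝ) - 1 := by
      rw [abs_le]
      constructor
      · have hd'' : (Fτ.card : ℝ) - Fσ.card ≤ (k' : ℝ) - 1 := by exact_mod_cast hd'
        linarith
      · have hu'' : (Fσ.card : ℝ) - Fτ.card ≤ (k' : ℝ) - 1 := by exact_mod_cast hu'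
        linarith
    have hk2' : (k' : ℝ) ≤ ((Fintype.card A : ℝ)) ^ 2 := by exact_mod_cast hk2
    have hMN' : ((Fintype.card A : ℝ)) ^ 2 ≤ (N : ℝ) := by exact_mod_cast hMN
    have hk1 : (1:ℝ) ≤ (k' : ℝ) := by exact_mod_cast hk'pos
    have key : ((k' : ℝ) - 1) * N ≤ (Fintype.card A : ℝ) ^ 2 * ((N : ℝ) - 1) := by nlinarith
    calc |(Fσ.card : ℝ) - Fτ.card| * N ≤ ((k' : ℝ) - 1) * N :=
          mul_le_mul_of_nonneg_right habs hNpos.le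
      _ ≤ _ := key
  · have hFle : ∀ (c : Finset (Fin N)), (∀ x ∈ c, x.val < N - 1) → c.card ≤ N - 1 := by
      intro c hc
      have hsub : c ⊆ univ.erase last := by
        intro x hx
        refine Finset.mem_erase.mpr ⟨?_, Finset.mem_univ x⟩
        intro hxe
        have := hc x hx
        rw [hxe] at this
        simp [hlastdef] at this
      calc c.card ≤ (univ.erase last).card := Finset.card_le_card hsub
        _ = N - 1 := by
            rw [Finset.card_erase_of_mem (Finset.mem_univ _), Finset.card_univ, Fintype.card_fin]
    have h1 : Fσ.card ≤ N - 1 := by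
      refine hFle _ ?_
      intro x hx
      exact (Finset.mem_filter.mp hx).2.1
    have h2 : Fτ.card ≤ N - 1 := by
      refine hFle _ ?_
      intro x hx
      exact (Finset.mem_filter.mp hx).2.1
    have hcast : ((N - 1 : ℕ) : ℝ) = (N : ℝ) - 1 := by
      rw [Nat.cast_sub (by omega)]
      norm_num
    have h1' : (Fσ.card : ℝ) ≤ (N : ℝ) - 1 := by
      rw [← hcast]; exact_mod_cast h1
    have h2' : (Fτ.card : ℝ) ≤ (N : ℝ) - 1 := by
      rw [← hcast]; exact_mod_cast h2
    have habs : |(Fσ.card : ℝ) - Fτ.card| ≤ (N : ℝ) - 1 := by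
      rw [abs_le]
      constructor
      · have : (0:ℝ) ≤ (Fσ.card : ℝ) := Nat.cast_nonneg _
        linarith
      · have : (0:ℝ) ≤ (Fτ.card : ℝ) := Nat.cast_nonneg _
        linarith
    have hMN' : (N : ℝ) < ((Fintype.card A : ℝ)) ^ 2 := by exact_mod_cast hMN
    have key : ((N : ℝ) - 1) * N ≤ (Fintype.card A : ℝ) ^ 2 * ((N : ℝ) - 1) := by nlinarith
    calc |(Fσ.card : ℝ) - Fτ.card| * N ≤ ((N : ℝ) - 1) * N :=
          mul_le_mul_of_nonneg_right habs hNpos.le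
      _ ≤ _ := key
end

section
/- Let A be a finite set and let π, π' be probability distributions on A with π' taking values in (1/N)ℤ for a positive integer N. Suppose J' is a function A×A → [0,1] taking values in (1/N)ℤ with both marginals equal to π'. Then there exist partitions {P_{a,b}} and {Q_{a,b}} of {1,…,N} indexed by A×A, and a map φ : {1,…,N} → A with empirical distribution π', such that |P_{a,b}| = |Q_{a,b}| = N·J'(a,b), P_{a,b} ⊆ φ⁻¹(a), and Q_{a,b} ⊆ φ⁻¹(b) for all a,b ∈ A. -/
lemma exists_partition {N : ℕ} {B : Type*} [Fintype B] [DecidableEq B]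
    (S : Finset (Fin N)) (n : B → ℕ) (h : ∑ b, n b = S.card) :
    ∃ T : B → Finset (Fin N), (∀ b, (T b).card = n b) ∧
      (∀ b, ∀ i ∈ T b, i ∈ S) ∧ (∀ i ∈ S, ∃! b, i ∈ T b) := by
  have hcard : Fintype.card (Σ b, Fin (n b)) = Fintype.card {x // x ∈ S} := by
    simp [Fintype.card_sigma, h]
  obtain e := Fintype.equivOfCardEq hcard
  refine ⟨fun b => Finset.univ.image (fun j : Fin (n b) => ((e ⟨b, j⟩ : {x // x ∈ S}) : Fin N)),
    ?_, ?_, ?_⟩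
  · intro b
    rw [Finset.card_image_of_injective _ ?_, Finset.card_univ, Fintype.card_fin]
    intro j j' hjj'
    have h2 := e.injective (Subtype.ext hjj')
    simpa using h2
  · intro b i hi
    simp only [Finset.mem_image, Finset.mem_univ, true_and] at hi
    obtain ⟨j, hj⟩ := hi
    rw [← hj]
    exact (e ⟨b, j⟩).2
  · intro i hi
    set x := e.symm ⟨i, hi⟩ with hx
    refine ⟨x.1, ?_, ?_⟩
    · simp only [Finset.mem_image, Finset.mem_univ, true_and]
      exact ⟨x.2, by rw [show (⟨x.1, x.2⟩ : Σ b, Fin (n b)) = x from rfl, hx, e.apply_symm_apply]⟩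
    · intro b hb
      simp only [Finset.mem_image, Finset.mem_univ, true_and] at hb
      obtain ⟨j, hj⟩ := hb
      have : (⟨b, j⟩ : Σ b, Fin (n b)) = x := by
        rw [hx, Equiv.eq_symm_apply]
        exact Subtype.ext hj
      exact congrArg Sigma.fst this

theorem stmt8 {A : Type*} [Fintype A] [DecidableEq A]
    (N : ℕ) (hN : 0 < N)
    (π' : A → ℝ) (J' : A → A → ℝ)
    (hπ'0 : ∀ a, 0 ≤ π' a) (hπ'1 : ∑ a, π' a = 1)
    (hπ'dyad : ∀ a, ∃ k : ℤ, π' a = (k : ℝ) / N)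
    (hJ'range : ∀ a b, 0 ≤ J' a b ∧ J' a b ≤ 1)
    (hJ'dyad : ∀ a b, ∃ k : ℤ, J' a b = (k : ℝ) / N)
    (hJ'1 : ∀ a, ∑ b, J' a b = π' a) (hJ'2 : ∀ b, ∑ a, J' a b = π' b) :
    ∃ (φ : Fin N → A) (P Q : A → A → Finset (Fin N)),
      (∀ a, π' a = ((Finset.univ.filter (fun i => φ i = a)).card : ℝ) / N) ∧
      (∀ i : Fin N, ∃! ab : A × A, i ∈ P ab.1 ab.2) ∧
      (∀ i : Fin N, ∃! ab : A × A, i ∈ Q ab.1 ab.2) ∧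
      (∀ a b, ((P a b).card : ℝ) = N * J' a b) ∧
      (∀ a b, ((Q a b).card : ℝ) = N * J' a b) ∧
      (∀ a b, ∀ i ∈ P a b, φ i = a) ∧
      (∀ a b, ∀ i ∈ Q a b, φ i = b) := by
  have hN0 : (N : ℝ) ≠ 0 := Nat.cast_ne_zero.2 hN.ne'
  -- integer table m with (m a b : ℝ) = N * J' a b
  have hm : ∀ a b, ∃ m : ℕ, (m : ℝ) = N * J' a b := by
    intro a b
    obtain ⟨k, hk⟩ := hJ'dyad a b
    have hk' : (k : ℝ) = N * J' a b := by rw [hk]; field_simp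
    have hk0 : (0 : ℝ) ≤ (k : ℝ) := hk' ▸ mul_nonneg (Nat.cast_nonneg N) (hJ'range a b).1
    have hk0' : 0 ≤ k := by exact_mod_cast hk0
    refine ⟨k.toNat, ?_⟩
    rw [← hk']
    exact_mod_cast Int.toNat_of_nonneg hk0'
  choose m hmeq using hm
  have hrow : ∀ a, ((∑ b, m a b : ℕ) : ℝ) = N * π' a := by
    intro a
    push_cast
    rw [← hJ'1 a, Finset.mul_sum]
    exact Finset.sum_congr rfl fun b _ => hmeq a b
  have hcol : ∀ b, ((∑ a, m a b : ℕ) : ℝ) = N * π' b := by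
    intro b
    push_cast
    rw [← hJ'2 b, Finset.mul_sum]
    exact Finset.sum_congr rfl fun a _ => hmeq a b
  -- partition of Fin N into P
  have htot : ∑ ab : A × A, m ab.1 ab.2 = (Finset.univ : Finset (Fin N)).card := by
    have h1 : (∑ ab : A × A, m ab.1 ab.2) = ∑ a, ∑ b, m a b := by
      rw [← Finset.univ_product_univ, Finset.sum_product]
    have h2 : ((∑ a, ∑ b, m a b : ℕ) : ℝ) = ((N : ℕ) : ℝ) := by
      push_cast
      rw [show (∑ a, ∑ b, ((m a b : ℝ))) = ∑ a, (N : ℝ) * π' a from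
        Finset.sum_congr rfl fun a _ => by rw [← hrow a]; push_cast; rfl]
      rw [← Finset.mul_sum, hπ'1, mul_one]
    rw [h1, Finset.card_fin]
    exact Nat.cast_inj.mp h2
  obtain ⟨P', hP1, hP2, hP3⟩ := exists_partition (Finset.univ : Finset (Fin N))
    (fun ab : A × A => m ab.1 ab.2) htot
  set P : A → A → Finset (Fin N) := fun a b => P' (a, b) with hPdef
  have hPu : ∀ i : Fin N, ∃! ab : A × A, i ∈ P ab.1 ab.2 := fun i =>
    hP3 i (Finset.mem_univ i)
  -- define φ
  set φ : Fin N → A := fun i => (hPu i).choose.1 with hφdef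
  have hφP : ∀ a b, ∀ i ∈ P a b, φ i = a := by
    intro a b i hi
    have hspec := (hPu i).choose_spec
    have := hspec.2 (a, b) hi
    exact (congrArg Prod.fst this).symm
  -- fibers
  have hfiber : ∀ a, (Finset.univ.filter (fun i => φ i = a)) = Finset.univ.biUnion (fun b => P a b) := by
    intro a
    ext i
    simp only [Finset.mem_filter, Finset.mem_univ, true_and, Finset.mem_biUnion]
    constructor
    · intro hφi
      have hspec := (hPu i).choose_spec
      exact ⟨(hPu i).choose.2, by rw [← hφi]; exact hspec.1⟩
    · rintro ⟨b, hb⟩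
      exact hφP a b i hb
  have hdisj : ∀ a, ∀ b ∈ (Finset.univ : Finset A), ∀ b' ∈ (Finset.univ : Finset A),
      b ≠ b' → Disjoint (P a b) (P a b') := by
    intro a b _ b' _ hbb'
    rw [Finset.disjoint_left]
    intro i hi hi'
    have h1 := (hPu i).unique (show i ∈ P (a, b).1 (a, b).2 from hi)
      (show i ∈ P (a, b').1 (a, b').2 from hi')
    exact hbb' (congrArg Prod.snd h1)
  have hfibcard : ∀ a, ((Finset.univ.filter (fun i => φ i = a)).card : ℝ) = N * π' a := by
    intro a
    rw [hfiber a, Finset.card_biUnion (hdisj a)]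
    rw [← hrow a]
    push_cast
    exact Finset.sum_congr rfl fun b _ => by rw [hP1 (a, b)]
  -- Q : for each b partition the fiber of b
  have hQex : ∀ b : A, ∃ T : A → Finset (Fin N), (∀ a, (T a).card = m a b) ∧
      (∀ a, ∀ i ∈ T a, i ∈ Finset.univ.filter (fun i => φ i = b)) ∧
      (∀ i ∈ Finset.univ.filter (fun i => φ i = b), ∃! a, i ∈ T a) := by
    intro b
    apply exists_partition
    have : ((∑ a, m a b : ℕ) : ℝ) = ((Finset.univ.filter (fun i => φ i = b)).card : ℝ) := by
      rw [hcol b, hfibcard b]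
    exact_mod_cast this
  choose T hT1 hT2 hT3 using hQex
  set Q : A → A → Finset (Fin N) := fun a b => T b a with hQdef
  have hQφ : ∀ a b, ∀ i ∈ Q a b, φ i = b := by
    intro a b i hi
    have := hT2 b a i hi
    simpa using this
  refine ⟨φ, P, Q, ?_, hPu, ?_, ?_, ?_, hφP, hQφ⟩
  · intro a
    rw [hfibcard a]
    field_simp
  · intro i
    have hi : i ∈ Finset.univ.filter (fun j => φ j = φ i) := by simp
    obtain ⟨a, ha, hau⟩ := hT3 (φ i) i hi
    refine ⟨(a, φ i), ha, ?_⟩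
    rintro ⟨a', b'⟩ hab
    have hb' : b' = φ i := (hQφ a' b' i hab).symm
    subst hb'
    exact Prod.ext (hau a' hab) rfl
  · intro a b
    rw [hP1 (a, b)]
    exact hmeq a b
  · intro a b
    rw [hT1 b a]
    exact hmeq a b
end

section
/- Let G be a group with finite symmetric generating set S, F = B(e,r) the ball of radius r in the word metric, and v, w actions of G on (X,μ). Let P be a finite partition, P' = ⋁_{g∈F} gP (common refinement under v), and β : Σ(P') → Σ(Q') a Boolean-algebra isomorphism onto the algebra generated by a partition Q' such that |μ(P₁ ∩ v_s P₂) − μ(β(P₁) ∩ w_s β(P₂))| < ε|P'|⁻²|F|⁻¹/4 for all P₁,P₂ ∈ P' and s ∈ S. Then for every P ∈ P and every g ∈ F, μ(β(v_g P) △ w_g β(P)) ≤ ε|g|/(2|F|), where |g| is the word length of g. -/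
/-- The word length of `g` with respect to the generating set `S`. -/
noncomputable def wordLength {G : Type*} [Group G] (S : Set G) (g : G) : ℕ :=
  sInf {n | ∃ l : List G, l.length = n ∧ (∀ x ∈ l, x ∈ S) ∧ l.prod = g}

open MeasureTheory Function Set in
lemma aux_sum' {X : Type*} [MeasurableSpace X] (μ : Measure X) [IsFiniteMeasure μ]
    {ι : Type*} [Fintype ι] [DecidableEq ι]
    (A : ι → Set X) (hAm : ∀ c, MeasurableSet (A c)) (hAd : Pairwise (onFun Disjoint A))
    (f : Equiv.Perm X) (hfm : ∀ s : Set X, MeasurableSet s → MeasurableSet (f '' s))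
    (I J : Finset ι) :
    (μ ((⋃ c ∈ I, A c) ∩ f '' (⋃ c ∈ J, A c))).toReal
      = ∑ p ∈ I ×ˢ J, (μ (A p.1 ∩ f '' A p.2)).toReal := by
  have hset : (⋃ c ∈ I, A c) ∩ f '' (⋃ c ∈ J, A c)
      = ⋃ p ∈ I ×ˢ J, (A p.1 ∩ f '' A p.2) := by
    rw [Set.image_iUnion₂]
    ext x
    simp only [Set.mem_inter_iff, Set.mem_iUnion, Finset.mem_product, Prod.exists]
    constructor
    · rintro ⟨⟨c, hc, hxc⟩, ⟨c', hc', hxc'⟩⟩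
      exact ⟨c, c', ⟨hc, hc'⟩, hxc, hxc'⟩
    · rintro ⟨c, c', ⟨hc, hc'⟩, hxc, hxc'⟩
      exact ⟨⟨c, hc, hxc⟩, ⟨c', hc', hxc'⟩⟩
  rw [hset, measure_biUnion_finset, ENNReal.toReal_sum]
  · exact fun p _ => measure_ne_top μ _
  · intro p _ q _ hpq
    rcases (Prod.ext_iff.not.mp hpq |> not_and_or.mp) with h | h
    · exact Disjoint.mono inf_le_left inf_le_left (hAd h)
    · exact Disjoint.mono inf_le_right inf_le_right
        ((Set.disjoint_image_iff f.injective).mpr (hAd h))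
  · exact fun p _ => (hAm p.1).inter (hfm _ (hAm p.2))

open Function in
lemma aux_compl' {X : Type*} {ι : Type*} [Fintype ι] [DecidableEq ι]
    (A : ι → Set X) (hAd : Pairwise (onFun Disjoint A)) (hAc : (⋃ c, A c) = Set.univ)
    (J : Finset ι) : (⋃ c ∈ Jᶜ, A c) = (⋃ c ∈ J, A c)ᶜ := by
  ext x
  simp only [Set.mem_iUnion, Set.mem_compl_iff, Finset.mem_compl, not_exists]
  constructor
  · rintro ⟨c, hc, hxc⟩ c' hc'
    intro hxc'
    rcases eq_or_ne c c' with rfl | hne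
    · exact hc hc'
    · exact Set.disjoint_left.mp (hAd hne) hxc hxc'
  · intro h
    have : x ∈ ⋃ c, A c := hAc ▸ Set.mem_univ x
    rcases Set.mem_iUnion.mp this with ⟨c, hxc⟩
    refine ⟨c, fun hc => h c hc hxc, hxc⟩

open MeasureTheory Function Set in
lemma aux_symmDiff' {X : Type*} [MeasurableSpace X] (μ : Measure X) [IsFiniteMeasure μ]
    {ι : Type*} [Fintype ι] [DecidableEq ι]
    (A : ι → Set X) (hAm : ∀ c, MeasurableSet (A c)) (hAd : Pairwise (onFun Disjoint A))
    (hAc : (⋃ c, A c) = Set.univ)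
    (f : Equiv.Perm X) (hfm : ∀ s : Set X, MeasurableSet s → MeasurableSet (f '' s))
    (I J : Finset ι) :
    (μ (symmDiff (⋃ c ∈ I, A c) (f '' ⋃ c ∈ J, A c))).toReal
      = (μ ((⋃ c ∈ I, A c) ∩ f '' (⋃ c ∈ Jᶜ, A c))).toReal
        + (μ ((⋃ c ∈ Iᶜ, A c) ∩ f '' (⋃ c ∈ J, A c))).toReal := by
  have h1 : (⋃ c ∈ I, A c) \ (f '' ⋃ c ∈ J, A c)
      = (⋃ c ∈ I, A c) ∩ f '' (⋃ c ∈ Jᶜ, A c) := by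
    rw [aux_compl' A hAd hAc, Set.image_compl_eq f.bijective, Set.diff_eq]
  have h2 : (f '' ⋃ c ∈ J, A c) \ (⋃ c ∈ I, A c)
      = (⋃ c ∈ Iᶜ, A c) ∩ f '' (⋃ c ∈ J, A c) := by
    rw [aux_compl' A hAd hAc, Set.diff_eq, Set.inter_comm]
  rw [Set.symmDiff_def, h1, h2, measure_union,
    ENNReal.toReal_add (measure_ne_top μ _) (measure_ne_top μ _)]
  · exact Set.disjoint_of_subset (Set.inter_subset_left)
      (fun x hx => (aux_compl' A hAd hAc I ▸ hx.1 : x ∈ _))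
      disjoint_compl_right
  · exact MeasurableSet.inter (Finset.measurableSet_biUnion _ (fun c _ => hAm c))
      (hfm _ (Finset.measurableSet_biUnion _ (fun c _ => hAm c)))

open MeasureTheory Function Set in
lemma aux_est' {X : Type*} [MeasurableSpace X] (μ : Measure X) [IsFiniteMeasure μ]
    {ι : Type*} [Fintype ι] [DecidableEq ι]
    (A B : ι → Set X)
    (hAm : ∀ c, MeasurableSet (A c)) (hAd : Pairwise (onFun Disjoint A))
    (hAc : (⋃ c, A c) = Set.univ)
    (hBm : ∀ c, MeasurableSet (B c)) (hBd : Pairwise (onFun Disjoint B))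
    (hBc : (⋃ c, B c) = Set.univ)
    (f g : Equiv.Perm X)
    (hfm : ∀ s : Set X, MeasurableSet s → MeasurableSet (f '' s))
    (hgm : ∀ s : Set X, MeasurableSet s → MeasurableSet (g '' s))
    (δ : ℝ) (hδ : 0 ≤ δ)
    (hsmall : ∀ c c', |(μ (A c ∩ f '' A c')).toReal - (μ (B c ∩ g '' B c')).toReal| ≤ δ)
    (I J : Finset ι) :
    |(μ (symmDiff (⋃ c ∈ I, A c) (f '' ⋃ c ∈ J, A c))).toReal
      - (μ (symmDiff (⋃ c ∈ I, B c) (g '' ⋃ c ∈ J, B c))).toReal|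
      ≤ 2 * (Fintype.card ι : ℝ)^2 * δ := by
  rw [aux_symmDiff' μ A hAm hAd hAc f hfm, aux_symmDiff' μ B hBm hBd hBc g hgm,
    aux_sum' μ A hAm hAd f hfm, aux_sum' μ A hAm hAd f hfm,
    aux_sum' μ B hBm hBd g hgm, aux_sum' μ B hBm hBd g hgm]
  have key : ∀ I' J' : Finset ι,
      |∑ p ∈ I' ×ˢ J', (μ (A p.1 ∩ f '' A p.2)).toReal
        - ∑ p ∈ I' ×ˢ J', (μ (B p.1 ∩ g '' B p.2)).toReal|
      ≤ (Fintype.card ι : ℝ)^2 * δ := by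
    intro I' J'
    rw [← Finset.sum_sub_distrib]
    calc |∑ p ∈ I' ×ˢ J', ((μ (A p.1 ∩ f '' A p.2)).toReal - (μ (B p.1 ∩ g '' B p.2)).toReal)|
        ≤ ∑ p ∈ I' ×ˢ J', |(μ (A p.1 ∩ f '' A p.2)).toReal - (μ (B p.1 ∩ g '' B p.2)).toReal| :=
          Finset.abs_sum_le_sum_abs _ _
      _ ≤ ∑ _p ∈ I' ×ˢ J', δ := Finset.sum_le_sum (fun p _ => hsmall p.1 p.2)
      _ = ((I' ×ˢ J').card : ℝ) * δ := by rw [Finset.sum_const, nsmul_eq_mul]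
      _ ≤ (Fintype.card ι : ℝ)^2 * δ := by
          apply mul_le_mul_of_nonneg_right _ hδ
          rw [Finset.card_product]
          push_cast
          calc (I'.card : ℝ) * J'.card ≤ (Fintype.card ι : ℝ) * (Fintype.card ι : ℝ) := by
                apply mul_le_mul <;>
                  simp [Nat.cast_le.mpr (Finset.card_le_univ _), Nat.cast_nonneg]
            _ = (Fintype.card ι : ℝ)^2 := (sq _).symm
  calc |_| ≤ |∑ p ∈ I ×ˢ Jᶜ, (μ (A p.1 ∩ f '' A p.2)).toReal
        - ∑ p ∈ I ×ˢ Jᶜ, (μ (B p.1 ∩ g '' B p.2)).toReal|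
      + |∑ p ∈ Iᶜ ×ˢ J, (μ (A p.1 ∩ f '' A p.2)).toReal
        - ∑ p ∈ Iᶜ ×ˢ J, (μ (B p.1 ∩ g '' B p.2)).toReal| := by
        rw [add_sub_add_comm]; exact abs_add_le _ _
    _ ≤ (Fintype.card ι : ℝ)^2 * δ + (Fintype.card ι : ℝ)^2 * δ := add_le_add (key _ _) (key _ _)
    _ = 2 * (Fintype.card ι : ℝ)^2 * δ := by ring

lemma wl_rep' {G : Type*} [Group G] (S : Finset G) (hSsym : ∀ s ∈ S, s⁻¹ ∈ S)
    (hSgen : Subgroup.closure (S : Set G) = ⊤) (g : G) :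
    ∃ l : List G, l.length = wordLength (S : Set G) g ∧ (∀ x ∈ l, x ∈ (S : Set G))
      ∧ l.prod = g := by
  have hmem : g ∈ Subgroup.closure (S : Set G) := hSgen ▸ Subgroup.mem_top g
  have hne : ∃ l : List G, (∀ x ∈ l, x ∈ (S : Set G)) ∧ l.prod = g := by
    induction hmem using Subgroup.closure_induction with
    | mem x hx => exact ⟨[x], by simpa using hx, by simp⟩
    | one => exact ⟨[], by simp, by simp⟩
    | mul x y hx hy ihx ihy =>
      obtain ⟨l1, h1, h1p⟩ := ihx
      obtain ⟨l2, h2, h2p⟩ := ihy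
      exact ⟨l1 ++ l2, by
        intro a ha; rcases List.mem_append.mp ha with h | h
        · exact h1 a h
        · exact h2 a h, by simp [h1p, h2p]⟩
    | inv x hx ihx =>
      obtain ⟨l, hl, hlp⟩ := ihx
      refine ⟨(l.map (·⁻¹)).reverse, ?_, ?_⟩
      · intro a ha
        simp only [List.mem_reverse, List.mem_map] at ha
        obtain ⟨b, hb, rfl⟩ := ha
        exact_mod_cast hSsym b (hl b hb)
      · rw [List.prod_reverse_noncomm]
        simp [hlp]
  have : {m | ∃ l : List G, l.length = m ∧ (∀ x ∈ l, x ∈ (S : Set G)) ∧ l.prod = g}.Nonempty := by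
    obtain ⟨l, hl, hlp⟩ := hne
    exact ⟨l.length, l, rfl, hl, hlp⟩
  obtain ⟨l, hlen, hl, hlp⟩ := Nat.sInf_mem this
  exact ⟨l, hlen, hl, hlp⟩

lemma wl_le' {G : Type*} [Group G] (S : Set G) (l : List G) (hl : ∀ x ∈ l, x ∈ S) :
    wordLength S l.prod ≤ l.length :=
  Nat.sInf_le ⟨l, rfl, hl, rfl⟩

set_option maxHeartbeats 2000000 in
open MeasureTheory in
theorem stmt11 {G X : Type*} [Group G] [MeasurableSpace X]
    (μ : Measure X) [IsProbabilityMeasure μ]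
    (v w : G →* Equiv.Perm X)
    (hv : ∀ g : G, MeasurePreserving (v g) μ μ)
    (hw : ∀ g : G, MeasurePreserving (w g) μ μ)
    (S : Finset G) (hSsym : ∀ s ∈ S, s⁻¹ ∈ S)
    (hSgen : Subgroup.closure (S : Set G) = ⊤)
    (r : ℕ) (F : Finset G)
    (hF : ∀ g : G, g ∈ F ↔ wordLength (S : Set G) g ≤ r)
    (h1 : (1 : G) ∈ F)
    (n : ℕ) (P : Fin n → Set X)
    (hPm : ∀ i, MeasurableSet (P i))
    (hPd : Pairwise (Function.onFun Disjoint P))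
    (hPc : (⋃ i, P i) = Set.univ)
    -- `β` assigns to each atom `⋂_{g ∈ F} v_g P_{c g}` of the refinement `P' = ⋁_{g∈F} gP`
    -- the corresponding atom of `Q'`; `Q'` is a partition of `X`.
    (β : (F → Fin n) → Set X)
    (hβm : ∀ c, MeasurableSet (β c))
    (hβd : Pairwise (Function.onFun Disjoint β))
    (hβc : (⋃ c, β c) = Set.univ)
    (ε : ℝ) (hε : 0 < ε)
    (hsmall : ∀ (c c' : F → Fin n), ∀ s ∈ S,
      |(μ ((⋂ g : F, (v (g : G)) '' P (c g)) ∩ (v s) '' (⋂ g : F, (v (g : G)) '' P (c' g)))).toReal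
        - (μ (β c ∩ (w s) '' β c')).toReal|
        < ε * (((n : ℝ) ^ F.card) ^ 2)⁻¹ * ((F.card : ℝ))⁻¹ / 4) :
    ∀ (i : Fin n) (g : G) (hg : g ∈ F),
      (μ (symmDiff (⋃ c ∈ {c : F → Fin n | c ⟨g, hg⟩ = i}, β c)
          ((w g) '' ⋃ c ∈ {c : F → Fin n | c ⟨1, h1⟩ = i}, β c))).toReal
        ≤ ε * (wordLength (S : Set G) g : ℝ) / (2 * F.card) := by
  classical
  -- n is positive
  have hn : 0 < n := by
    rcases Nat.eq_zero_or_pos n with rfl | h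
    · exfalso
      have h0 : μ (⋃ i : Fin 0, P i) = 1 := by rw [hPc]; exact measure_univ
      rw [Set.iUnion_of_empty, measure_empty] at h0
      exact zero_ne_one h0
    · exact h
  -- F.card is positive
  have hFc : 0 < F.card := Finset.card_pos.mpr ⟨1, h1⟩
  -- images under the actions are measurable and measure preserving
  have himg : ∀ (u : G →* Equiv.Perm X), (∀ g : G, MeasurePreserving (u g) μ μ) →
      ∀ (g : G) (s : Set X), MeasurableSet s → MeasurableSet (u g '' s) := by
    intro u hu g s hs
    have he : (u g) '' s = (u g⁻¹) ⁻¹' s := by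
      rw [Equiv.image_eq_preimage_symm, map_inv]
      rfl
    rw [he]
    exact (hu g⁻¹).measurable hs
  have hpres : ∀ (u : G →* Equiv.Perm X), (∀ g : G, MeasurePreserving (u g) μ μ) →
      ∀ (g : G) (s : Set X), MeasurableSet s → μ (u g '' s) = μ s := by
    intro u hu g s hs
    have he : (u g) '' s = (u g⁻¹) ⁻¹' s := by
      rw [Equiv.image_eq_preimage_symm, map_inv]
      rfl
    rw [he]
    exact (hu g⁻¹).measure_preimage hs.nullMeasurableSet
  -- the atoms of the refinement
  set A : (F → Fin n) → Set X := fun c => ⋂ g : F, (v (g : G)) '' P (c g) with hA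
  have hAm : ∀ c, MeasurableSet (A c) := by
    intro c
    exact MeasurableSet.iInter fun g => himg v hv _ _ (hPm _)
  have hAd : Pairwise (Function.onFun Disjoint A) := by
    intro c d hcd
    obtain ⟨g, hgne⟩ := Function.ne_iff.mp hcd
    refine Set.disjoint_left.mpr fun x hxc hxd => ?_
    have h1x : x ∈ (v (g : G)) '' P (c g) := Set.mem_iInter.mp hxc g
    have h2x : x ∈ (v (g : G)) '' P (d g) := Set.mem_iInter.mp hxd g
    have hdis : Disjoint ((v (g : G)) '' P (c g)) ((v (g : G)) '' P (d g)) :=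
      (Set.disjoint_image_iff (v (g : G)).injective).mpr (hPd hgne)
    exact Set.disjoint_left.mp hdis h1x h2x
  have hAc : (⋃ c, A c) = Set.univ := by
    rw [Set.iUnion_eq_univ_iff]
    intro x
    have hex : ∀ g : F, ∃ i : Fin n, x ∈ (v (g : G)) '' P i := by
      intro g
      have : (v (g : G)).symm x ∈ ⋃ i, P i := hPc ▸ Set.mem_univ _
      rcases Set.mem_iUnion.mp this with ⟨i, hi⟩
      exact ⟨i, (v (g : G)).symm x, hi, Equiv.apply_symm_apply _ _⟩
    choose c hc using hex
    exact ⟨c, Set.mem_iInter.mpr hc⟩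
  -- the index sets
  set Iset : ∀ (g : G), g ∈ F → Fin n → Finset (F → Fin n) :=
    fun g hg i => Finset.univ.filter (fun c => c ⟨g, hg⟩ = i) with hIset
  have hgoalset : ∀ (g : G) (hg : g ∈ F) (i : Fin n) (B : (F → Fin n) → Set X),
      (⋃ c ∈ {c : F → Fin n | c ⟨g, hg⟩ = i}, B c) = ⋃ c ∈ Iset g hg i, B c := by
    intro g hg i B
    ext x
    simp only [hIset, Set.mem_iUnion, Set.mem_setOf_eq, Finset.mem_filter,
      Finset.mem_univ, true_and]
  -- key identity: the union of atoms with c g = i is v g '' P i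
  have hkey : ∀ (g : G) (hg : g ∈ F) (i : Fin n),
      (⋃ c ∈ Iset g hg i, A c) = (v g) '' P i := by
    intro g hg i
    apply Set.Subset.antisymm
    · intro x hx
      rcases Set.mem_iUnion₂.mp hx with ⟨c, hc, hxc⟩
      have hci : c ⟨g, hg⟩ = i := by
        simp only [hIset, Finset.mem_filter, Finset.mem_univ, true_and] at hc
        exact hc
      have := Set.mem_iInter.mp hxc ⟨g, hg⟩
      rwa [hci] at this
    · intro x hx
      have : x ∈ ⋃ c, A c := hAc ▸ Set.mem_univ x
      rcases Set.mem_iUnion.mp this with ⟨c, hxc⟩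
      have hxg : x ∈ (v g) '' P (c ⟨g, hg⟩) := Set.mem_iInter.mp hxc ⟨g, hg⟩
      have hci : c ⟨g, hg⟩ = i := by
        by_contra hne
        have hdis : Disjoint ((v g) '' P (c ⟨g, hg⟩)) ((v g) '' P i) :=
          (Set.disjoint_image_iff (v g).injective).mpr (hPd hne)
        exact Set.disjoint_left.mp hdis hxg hx
      exact Set.mem_iUnion₂.mpr ⟨c, by
        simp only [hIset, Finset.mem_filter, Finset.mem_univ, true_and]
        exact hci, hxc⟩
  -- cardinal arithmetic
  have hNcard : (Fintype.card (F → Fin n) : ℝ) = (n : ℝ) ^ F.card := by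
    rw [Fintype.card_fun, Fintype.card_fin, Fintype.card_coe]
    push_cast
    ring
  have hNpos : (0 : ℝ) < (n : ℝ) ^ F.card := pow_pos (by exact_mod_cast hn) _
  have hFcR : (0 : ℝ) < (F.card : ℝ) := by exact_mod_cast hFc
  -- the one-step estimate
  have hstep : ∀ s ∈ S, ∀ I J : Finset (F → Fin n),
      |(μ (symmDiff (⋃ c ∈ I, A c) ((v s) '' ⋃ c ∈ J, A c))).toReal
        - (μ (symmDiff (⋃ c ∈ I, β c) ((w s) '' ⋃ c ∈ J, β c))).toReal|
        ≤ ε / (2 * F.card) := by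
    intro s hs I J
    have hδ0 : 0 ≤ ε * (((n : ℝ) ^ F.card) ^ 2)⁻¹ * ((F.card : ℝ))⁻¹ / 4 := by positivity
    have h := aux_est' μ A β hAm hAd hAc hβm hβd hβc (v s) (w s)
      (himg v hv s) (himg w hw s)
      (ε * (((n : ℝ) ^ F.card) ^ 2)⁻¹ * ((F.card : ℝ))⁻¹ / 4) hδ0
      (fun c c' => (hsmall c c' s hs).le) I J
    refine h.trans (le_of_eq ?_)
    rw [hNcard]
    field_simp
    ring
  -- main induction on word length
  have H : ∀ (k : ℕ) (i : Fin n) (g : G) (hg : g ∈ F), wordLength (S : Set G) g = k →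
      (μ (symmDiff (⋃ c ∈ {c : F → Fin n | c ⟨g, hg⟩ = i}, β c)
          ((w g) '' ⋃ c ∈ {c : F → Fin n | c ⟨1, h1⟩ = i}, β c))).toReal
        ≤ ε * (k : ℝ) / (2 * F.card) := by
    intro k
    induction k using Nat.strong_induction_on with
    | _ k ih =>
      intro i g hg hwl
      rcases k with _ | k
      · -- base case : g = 1
        obtain ⟨l, hlen, _, hlp⟩ := wl_rep' S hSsym hSgen g
        rw [hwl, List.length_eq_zero_iff] at hlen
        obtain rfl : g = 1 := by rw [← hlp, hlen, List.prod_nil]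
        have hsame : ({c : F → Fin n | c ⟨1, hg⟩ = i} : Set (F → Fin n))
            = {c : F → Fin n | c ⟨1, h1⟩ = i} := rfl
        rw [hsame]
        simp only [map_one, Equiv.Perm.coe_one, Set.image_id, symmDiff_self,
          Set.bot_eq_empty, measure_empty, ENNReal.toReal_zero, Nat.cast_zero,
          mul_zero, zero_div, le_refl]
      · -- inductive step : g = s * g'
        obtain ⟨l, hlen, hlS, hlp⟩ := wl_rep' S hSsym hSgen g
        rw [hwl] at hlen
        rcases l with _ | ⟨s, t⟩
        · simp at hlen
        have hs : s ∈ S := by exact_mod_cast hlS s List.mem_cons_self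
        have htS : ∀ x ∈ t, x ∈ (S : Set G) := fun x hx => hlS x (List.mem_cons_of_mem _ hx)
        set g' := t.prod with hg'def
        have htlen : t.length = k := by
          simp only [List.length_cons] at hlen
          omega
        have hg'len : wordLength (S : Set G) g' ≤ k := htlen ▸ wl_le' (S : Set G) t htS
        have hgr : wordLength (S : Set G) g ≤ r := (hF g).mp hg
        rw [hwl] at hgr
        have hg' : g' ∈ F := (hF g').mpr (hg'len.trans ((Nat.le_succ k).trans hgr))
        have hsg : g = s * g' := by rw [← hlp, List.prod_cons]
        set m := wordLength (S : Set G) g' with hmdef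
        have ihm := ih m (Nat.lt_succ_of_le hg'len) i g' hg' rfl
        rw [hgoalset g hg i β, hgoalset 1 h1 i β]
        rw [hgoalset g' hg' i β, hgoalset 1 h1 i β] at ihm
        set Ug : Set X := ⋃ c ∈ Iset g hg i, β c with hUg
        set Ug' : Set X := ⋃ c ∈ Iset g' hg' i, β c with hUg'
        set U1 : Set X := ⋃ c ∈ Iset 1 h1 i, β c with hU1
        have hUg'm : MeasurableSet Ug' :=
          Finset.measurableSet_biUnion _ (fun c _ => hβm c)
        have hU1m : MeasurableSet U1 :=
          Finset.measurableSet_biUnion _ (fun c _ => hβm c)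
        -- first term : one-step estimate with zero v-side
        have hfirst : (μ (symmDiff Ug ((w s) '' Ug'))).toReal ≤ ε / (2 * F.card) := by
          have h0 : symmDiff (⋃ c ∈ Iset g hg i, A c) ((v s) '' ⋃ c ∈ Iset g' hg' i, A c)
              = ∅ := by
            rw [hkey g hg i, hkey g' hg' i, ← Set.image_comp]
            have : (⇑(v s) ∘ ⇑(v g')) = ⇑(v g) := by
              rw [hsg, map_mul]
              rfl
            rw [this, symmDiff_self]
            rfl
          have h := hstep s hs (Iset g hg i) (Iset g' hg' i)
          rw [h0] at h
          simp only [measure_empty, ENNReal.toReal_zero, zero_sub, abs_neg, abs_of_nonneg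
            ENNReal.toReal_nonneg] at h
          exact h
        -- second term : measure preservation
        have hsecond : (μ (symmDiff ((w s) '' Ug') ((w g) '' U1))).toReal
            = (μ (symmDiff Ug' ((w g') '' U1))).toReal := by
          have him : (w g) '' U1 = (w s) '' ((w g') '' U1) := by
            rw [hsg, map_mul, ← Set.image_comp]
            rfl
          rw [him, ← Set.image_symmDiff (w s).injective]
          rw [hpres w hw s _ (hUg'm.symmDiff (himg w hw g' _ hU1m))]
        -- triangle inequality
        have htri : (μ (symmDiff Ug ((w g) '' U1))).toReal
            ≤ (μ (symmDiff Ug ((w s) '' Ug'))).toReal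
              + (μ (symmDiff ((w s) '' Ug') ((w g) '' U1))).toReal := by
          have h := measure_symmDiff_le (μ := μ) Ug ((w s) '' Ug') ((w g) '' U1)
          have := ENNReal.toReal_mono
            (ENNReal.add_ne_top.mpr ⟨measure_ne_top μ _, measure_ne_top μ _⟩) h
          rwa [ENNReal.toReal_add (measure_ne_top μ _) (measure_ne_top μ _)] at this
        calc (μ (symmDiff Ug ((w g) '' U1))).toReal
            ≤ (μ (symmDiff Ug ((w s) '' Ug'))).toReal
              + (μ (symmDiff ((w s) '' Ug') ((w g) '' U1))).toReal := htri
          _ ≤ ε / (2 * F.card) + ε * (m : ℝ) / (2 * F.card) := by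
              rw [hsecond]; exact add_le_add hfirst ihm
          _ = ε * ((m : ℝ) + 1) / (2 * F.card) := by ring
          _ ≤ ε * ((k : ℝ) + 1) / (2 * F.card) := by
              have hm : (m : ℝ) + 1 ≤ (k : ℝ) + 1 := by
                have : (m : ℝ) ≤ (k : ℝ) := by exact_mod_cast hg'len
                linarith
              have h2 : (0 : ℝ) < 2 * (F.card : ℝ) := by positivity
              exact (div_le_div_iff_of_pos_right h2).mpr (mul_le_mul_of_nonneg_left hm hε.le)
          _ = ε * ((k + 1 : ℕ) : ℝ) / (2 * F.card) := by push_cast; ring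
  intro i g hg
  exact H (wordLength (S : Set G) g) i g hg rfl
end

section
/- Let G be a group with a finite symmetric generating set S. Let v be an action of G on a standard probability space (X,μ) and W a set of actions of G on (X,μ). Suppose that for every ε > 0 and every finite Borel partition {P₁,…,Pₙ} of X there exist w ∈ W and a finite Borel partition {Q₁,…,Qₙ} of X such that |μ(P_i ∩ v_s P_j) − μ(Q_i ∩ w_s Q_j)| < ε for all s ∈ S and 1 ≤ i,j ≤ n. Then v belongs to the closure of W in the weak topology on A(G,X,μ); equivalently, for every ε > 0, every finite partition {P₁,…,Pₙ}, and every finite F ⊂ G, there exist w ∈ W and a partition {Q₁,…,Qₙ} with |μ(P_i ∩ v_g P_j) − μ(Q_i ∩ w_g Q_j)| < ε for all g ∈ F. -/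
open MeasureTheory Set
set_option linter.unusedSectionVars false
set_option maxHeartbeats 2000000

section
variable {G X : Type*} [Group G] [MeasurableSpace X]
  (μ : Measure X) [IsProbabilityMeasure μ]

lemma perm_image_eq (a : G →* Equiv.Perm X) (g : G) (A : Set X) :
    (a g) '' A = (a g⁻¹) ⁻¹' A := by
  rw [Equiv.image_eq_preimage_symm, map_inv]; rfl

lemma meas_perm_image (a : G →* Equiv.Perm X) (ha : ∀ g, MeasurePreserving (a g) μ μ)
    (g : G) {A : Set X} (hA : MeasurableSet A) : MeasurableSet ((a g) '' A) := by
  rw [perm_image_eq]; exact (ha g⁻¹).measurable hA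

lemma measure_perm_image (a : G →* Equiv.Perm X) (ha : ∀ g, MeasurePreserving (a g) μ μ)
    (g : G) {A : Set X} (hA : MeasurableSet A) : μ ((a g) '' A) = μ A := by
  rw [perm_image_eq]; exact (ha g⁻¹).measure_preimage hA.nullMeasurableSet

lemma perm_image_mul (a : G →* Equiv.Perm X) (g h : G) (A : Set X) :
    (a (g * h)) '' A = (a g) '' ((a h) '' A) := by
  rw [map_mul, ← Set.image_comp]; rfl

lemma perm_image_one (a : G →* Equiv.Perm X) (A : Set X) : (a 1) '' A = A := by
  rw [map_one]; simp

lemma perm_image_cancel (a : G →* Equiv.Perm X) (g : G) (A : Set X) :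
    (a g⁻¹) '' ((a g) '' A) = A := by
  rw [← perm_image_mul, inv_mul_cancel, perm_image_one]

lemma measure_shift (a : G →* Equiv.Perm X) (ha : ∀ g, MeasurePreserving (a g) μ μ)
    (s : G) {A B : Set X} (hA : MeasurableSet A) (hB : MeasurableSet B) :
    μ (A ∩ (a s) '' B) = μ ((a s⁻¹) '' A ∩ B) := by
  have h1 : (a s⁻¹) '' (A ∩ (a s) '' B) = (a s⁻¹) '' A ∩ B := by
    rw [Set.image_inter (a s⁻¹).injective, perm_image_cancel]
  rw [← h1, measure_perm_image μ a ha]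
  exact hA.inter (meas_perm_image μ a ha s hB)

lemma mreal_biUnion {ι : Type*} (s : Finset ι) (f : ι → Set X)
    (hm : ∀ i ∈ s, MeasurableSet (f i))
    (hd : (s : Set ι).Pairwise (Function.onFun Disjoint f)) :
    (μ (⋃ i ∈ s, f i)).toReal = ∑ i ∈ s, (μ (f i)).toReal := by
  rw [measure_biUnion_finset hd hm, ENNReal.toReal_sum]
  intro a _; exact measure_ne_top μ _

lemma mreal_mono {A B : Set X} (h : A ⊆ B) : (μ A).toReal ≤ (μ B).toReal :=
  ENNReal.toReal_mono (measure_ne_top μ _) (measure_mono h)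

lemma mreal_union_le (A B : Set X) :
    (μ (A ∪ B)).toReal ≤ (μ A).toReal + (μ B).toReal := by
  rw [← ENNReal.toReal_add (measure_ne_top μ _) (measure_ne_top μ _)]
  exact ENNReal.toReal_mono (by simp [ENNReal.add_ne_top, measure_ne_top])
    (measure_union_le A B)

lemma mreal_inter_add_diff (A : Set X) {B : Set X} (hB : MeasurableSet B) :
    (μ (A ∩ B)).toReal + (μ (A \ B)).toReal = (μ A).toReal := by
  rw [← ENNReal.toReal_add (measure_ne_top μ _) (measure_ne_top μ _),
    measure_inter_add_diff A hB]

lemma mreal_abs_inter_sub (A B C : Set X) :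
    |(μ (A ∩ C)).toReal - (μ (B ∩ C)).toReal| ≤ (μ (A \ B)).toReal + (μ (B \ A)).toReal := by
  have key : ∀ A' B' : Set X, (μ (A' ∩ C)).toReal - (μ (B' ∩ C)).toReal ≤ (μ (A' \ B')).toReal := by
    intro A' B'
    have h1 : A' ∩ C ⊆ (B' ∩ C) ∪ (A' \ B') := by
      intro x hx
      by_cases hb : x ∈ B'
      · exact Or.inl ⟨hb, hx.2⟩
      · exact Or.inr ⟨hx.1, hb⟩
    have := (mreal_mono μ h1).trans (mreal_union_le μ _ _)
    linarith
  rw [abs_sub_le_iff]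
  constructor
  · exact (key A B).trans (le_add_of_nonneg_right (by positivity))
  · exact (key B A).trans (le_add_of_nonneg_left (by positivity))

lemma mreal_decomp {ι : Type*} (R : ι → Set X) (hm : ∀ i, MeasurableSet (R i))
    (hd : Pairwise (Function.onFun Disjoint R))
    (a : G →* Equiv.Perm X) (ha : ∀ g, MeasurePreserving (a g) μ μ) (g : G)
    (IA IB : Finset ι) :
    (μ ((⋃ ρ ∈ IA, R ρ) ∩ (a g) '' (⋃ σ ∈ IB, R σ))).toReal
      = ∑ p ∈ IA ×ˢ IB, (μ (R p.1 ∩ (a g) '' R p.2)).toReal := by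
  have hset : (⋃ ρ ∈ IA, R ρ) ∩ (a g) '' (⋃ σ ∈ IB, R σ)
      = ⋃ p ∈ IA ×ˢ IB, (R p.1 ∩ (a g) '' R p.2) := by
    rw [Set.image_iUnion₂]
    ext x
    simp only [Set.mem_inter_iff, Set.mem_iUnion, Finset.mem_product, exists_prop, Prod.exists]
    constructor
    · rintro ⟨⟨ρ, hρ, hx1⟩, ⟨σ, hσ, hx2⟩⟩
      exact ⟨ρ, σ, ⟨hρ, hσ⟩, hx1, hx2⟩
    · rintro ⟨ρ, σ, ⟨hρ, hσ⟩, hx1, hx2⟩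
      exact ⟨⟨ρ, hρ, hx1⟩, ⟨σ, hσ, hx2⟩⟩
  rw [hset, mreal_biUnion]
  · intro p _
    exact (hm p.1).inter (meas_perm_image μ a ha g (hm p.2))
  · intro p _ q _ hpq
    by_cases h1 : p.1 = q.1
    · have h2 : p.2 ≠ q.2 := fun h2 => hpq (Prod.ext h1 h2)
      exact Disjoint.mono Set.inter_subset_right Set.inter_subset_right
        ((Set.disjoint_image_iff (a g).injective).mpr (hd h2))
    · exact Disjoint.mono Set.inter_subset_left Set.inter_subset_left (hd h1)

end

section
variable {G X : Type*} [Group G] [MeasurableSpace X]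

def GoodOn (μ : Measure X) (v : G →* Equiv.Perm X) (W : Set (G →* Equiv.Perm X))
    (D : Set G) : Prop :=
  ∀ ε > (0 : ℝ), ∀ (n : ℕ) (P : Fin n → Set X),
    (∀ i, MeasurableSet (P i)) → Pairwise (Function.onFun Disjoint P) →
    (⋃ i, P i) = Set.univ →
    ∃ w ∈ W, ∃ Q : Fin n → Set X,
      (∀ i, MeasurableSet (Q i)) ∧ Pairwise (Function.onFun Disjoint Q) ∧
      (⋃ i, Q i) = Set.univ ∧
      ∀ g ∈ D, ∀ i j,
        |(μ (P i ∩ (v g) '' P j)).toReal - (μ (Q i ∩ (w g) '' Q j)).toReal| < ε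

variable {μ : Measure X} {v : G →* Equiv.Perm X} {W : Set (G →* Equiv.Perm X)} {D : Set G}

lemma GoodOn.fintype (hD : GoodOn μ v W D) {ι : Type*} [Fintype ι]
    {ε : ℝ} (hε : 0 < ε) (P : ι → Set X)
    (hm : ∀ i, MeasurableSet (P i)) (hd : Pairwise (Function.onFun Disjoint P))
    (hc : (⋃ i, P i) = Set.univ) :
    ∃ w ∈ W, ∃ T : ι → Set X,
      (∀ i, MeasurableSet (T i)) ∧ Pairwise (Function.onFun Disjoint T) ∧
      (⋃ i, T i) = Set.univ ∧
      ∀ g ∈ D, ∀ i j,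
        |(μ (P i ∩ (v g) '' P j)).toReal - (μ (T i ∩ (w g) '' T j)).toReal| < ε := by
  classical
  set N := Fintype.card ι with hN
  set e : Fin N ≃ ι := (Fintype.equivFin ι).symm with he
  obtain ⟨w, hwW, Q', hQ'm, hQ'd, hQ'c, hQ'b⟩ :=
    hD ε hε N (P ∘ e) (fun i => hm (e i))
      (fun i j hij => hd (fun h => hij (e.injective h)))
      (by rw [← hc]; exact e.surjective.iUnion_comp P)
  refine ⟨w, hwW, Q' ∘ e.symm, fun i => hQ'm _, ?_, ?_, ?_⟩
  · exact fun i j hij => hQ'd (fun h => hij (e.symm.injective h))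
  · rw [← hQ'c]; exact e.symm.surjective.iUnion_comp Q'
  · intro g hg i j
    have := hQ'b g hg (e.symm i) (e.symm j)
    simpa using this
end
section
variable {G X : Type*} [Group G] [MeasurableSpace X]
  {μ : Measure X} [IsProbabilityMeasure μ]
  {v : G →* Equiv.Perm X} {W : Set (G →* Equiv.Perm X)} {S : Finset G}

lemma goodOn_base (hv : ∀ g, MeasurePreserving (v g) μ μ)
    (hW : ∀ w ∈ W, ∀ g, MeasurePreserving (w g) μ μ)
    (hyp : GoodOn μ v W (↑S : Set G)) :
    GoodOn μ v W (insert 1 (↑S : Set G)) := by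
  intro ε hε n P hm hd hc
  rcases S.eq_empty_or_nonempty with rfl | ⟨s₀, hs₀⟩
  · obtain ⟨w, hwW, Q, _, _, _, _⟩ := hyp ε hε n P hm hd hc
    refine ⟨w, hwW, P, hm, hd, hc, ?_⟩
    intro g hg i j
    have hg1 : g = 1 := by simpa using hg
    subst hg1
    rw [perm_image_one, perm_image_one, sub_self, abs_zero]
    exact hε
  · have hn1 : (0:ℝ) < (n:ℝ) + 1 := by positivity
    set δ := ε / ((n:ℝ) + 1) with hδdef
    have hδ : 0 < δ := by positivity
    obtain ⟨w, hwW, Q, hQm, hQd, hQc, hB⟩ := hyp δ hδ n P hm hd hc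
    refine ⟨w, hwW, Q, hQm, hQd, hQc, ?_⟩
    intro g hg i j
    rcases Set.mem_insert_iff.mp hg with rfl | hgS
    · -- g = 1
      by_cases hij : i = j
      · subst hij
        rw [perm_image_one, perm_image_one, Set.inter_self, Set.inter_self]
        -- decompose P i and Q i along translates by s₀
        have covP : (⋃ k, (v s₀) '' P k) = Set.univ := by
          rw [← Set.image_iUnion, hc, Set.image_univ]
          exact (v s₀).surjective.range_eq
        have covQ : (⋃ k, (w s₀) '' Q k) = Set.univ := by
          rw [← Set.image_iUnion, hQc, Set.image_univ]
          exact (w s₀).surjective.range_eq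
        have eP : P i = ⋃ k ∈ Finset.univ, (P i ∩ (v s₀) '' P k) := by
          simp only [Finset.mem_univ, Set.iUnion_true]
          rw [← Set.inter_iUnion, covP, Set.inter_univ]
        have eQ : Q i = ⋃ k ∈ Finset.univ, (Q i ∩ (w s₀) '' Q k) := by
          simp only [Finset.mem_univ, Set.iUnion_true]
          rw [← Set.inter_iUnion, covQ, Set.inter_univ]
        have sP : (μ (P i)).toReal = ∑ k : Fin n, (μ (P i ∩ (v s₀) '' P k)).toReal := by
          conv_lhs => rw [eP]
          rw [mreal_biUnion]
          · intro k _; exact (hm i).inter (meas_perm_image μ v hv s₀ (hm k))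
          · intro k _ l _ hkl
            exact Disjoint.mono Set.inter_subset_right Set.inter_subset_right
              ((Set.disjoint_image_iff (v s₀).injective).mpr (hd hkl))
        have sQ : (μ (Q i)).toReal = ∑ k : Fin n, (μ (Q i ∩ (w s₀) '' Q k)).toReal := by
          conv_lhs => rw [eQ]
          rw [mreal_biUnion]
          · intro k _; exact (hQm i).inter (meas_perm_image μ w (hW w hwW) s₀ (hQm k))
          · intro k _ l _ hkl
            exact Disjoint.mono Set.inter_subset_right Set.inter_subset_right
              ((Set.disjoint_image_iff (w s₀).injective).mpr (hQd hkl))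
        rw [sP, sQ, ← Finset.sum_sub_distrib]
        calc |∑ k : Fin n, ((μ (P i ∩ (v s₀) '' P k)).toReal - (μ (Q i ∩ (w s₀) '' Q k)).toReal)|
            ≤ ∑ k : Fin n, |(μ (P i ∩ (v s₀) '' P k)).toReal - (μ (Q i ∩ (w s₀) '' Q k)).toReal| :=
              Finset.abs_sum_le_sum_abs _ _
          _ ≤ ∑ _k : Fin n, δ := Finset.sum_le_sum (fun k _ => (hB s₀ hs₀ i k).le)
          _ = (n:ℝ) * δ := by simp [mul_comm]
          _ < ε := by
              rw [hδdef]
              have : (n:ℝ) / ((n:ℝ)+1) < 1 := by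
                rw [div_lt_one hn1]; linarith
              calc (n:ℝ) * (ε / ((n:ℝ)+1)) = ((n:ℝ)/((n:ℝ)+1)) * ε := by ring
                _ < 1 * ε := by exact mul_lt_mul_of_pos_right this hε
                _ = ε := one_mul ε
      · have h1 : P i ∩ P j = ∅ := Set.disjoint_iff_inter_eq_empty.mp (hd hij)
        have h2 : Q i ∩ Q j = ∅ := Set.disjoint_iff_inter_eq_empty.mp (hQd hij)
        rw [perm_image_one, perm_image_one, h1, h2, sub_self, abs_zero]
        exact hε
    · have hgS' : g ∈ S := hgS
      exact lt_of_lt_of_le (hB g hgS' i j)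
        (div_le_self hε.le (by linarith : (1:ℝ) ≤ (n:ℝ) + 1))
end
section
variable {G X : Type*} [Group G] [MeasurableSpace X]
  {μ : Measure X} [IsProbabilityMeasure μ]
  {v : G →* Equiv.Perm X} {W : Set (G →* Equiv.Perm X)} {S : Finset G}

lemma goodOn_step (hv : ∀ g, MeasurePreserving (v g) μ μ)
    (hW : ∀ w ∈ W, ∀ g, MeasurePreserving (w g) μ μ)
    (hSsym : ∀ s ∈ S, s⁻¹ ∈ S) {D : Set G}
    (h1D : (1:G) ∈ D) (hSD : (↑S : Set G) ⊆ D)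
    (ih : GoodOn μ v W D) :
    GoodOn μ v W (D ∪ {g | ∃ s ∈ S, ∃ h ∈ D, g = s * h}) := by
  classical
  intro ε hε n P hm hd hc
  set ι := Fin n × ({x // x ∈ S} → Fin n) with hι
  set Rp : ι → Set X := fun ρ => P ρ.1 ∩ ⋂ s : {x // x ∈ S}, (v ↑s) '' P (ρ.2 s) with hRp
  have hRm : ∀ ρ, MeasurableSet (Rp ρ) := fun ρ =>
    (hm _).inter (MeasurableSet.iInter (fun s => meas_perm_image μ v hv _ (hm _)))
  have hRsub1 : ∀ ρ : ι, Rp ρ ⊆ P ρ.1 := fun ρ => Set.inter_subset_left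
  have hRsub2 : ∀ (ρ : ι) (s : {x // x ∈ S}), Rp ρ ⊆ (v ↑s) '' P (ρ.2 s) := fun ρ s =>
    Set.inter_subset_right.trans (Set.iInter_subset _ s)
  have hRd : Pairwise (Function.onFun Disjoint Rp) := by
    intro ρ σ hρσ
    by_cases h1 : ρ.1 = σ.1
    · have h2 : ρ.2 ≠ σ.2 := fun h => hρσ (Prod.ext h1 h)
      obtain ⟨s, hs⟩ : ∃ s, ρ.2 s ≠ σ.2 s := by
        by_contra h'; push_neg at h'; exact h2 (funext h')
      exact Disjoint.mono (hRsub2 ρ s) (hRsub2 σ s)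
        ((Set.disjoint_image_iff (v ↑s).injective).mpr (hd hs))
    · exact Disjoint.mono (hRsub1 ρ) (hRsub1 σ) (hd h1)
  have hcov : ∀ x, ∃ ρ, x ∈ Rp ρ := by
    intro x
    have h1 : ∃ i, x ∈ P i := by
      have : x ∈ ⋃ i, P i := hc ▸ Set.mem_univ x
      exact Set.mem_iUnion.mp this
    have h2 : ∀ s : {x // x ∈ S}, ∃ k, x ∈ (v ↑s) '' P k := by
      intro s
      have : (v (↑s : G)⁻¹) x ∈ ⋃ i, P i := hc ▸ Set.mem_univ _
      obtain ⟨k, hk⟩ := Set.mem_iUnion.mp this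
      exact ⟨k, by rw [perm_image_eq]; exact hk⟩
    obtain ⟨i, hi⟩ := h1
    choose f hf using h2
    exact ⟨(i, f), hi, Set.mem_iInter.mpr hf⟩
  have hRc : (⋃ ρ, Rp ρ) = Set.univ :=
    Set.eq_univ_iff_forall.mpr (fun x => Set.mem_iUnion.mpr (hcov x))
  set Kfin : Fin n → Finset ι := fun i => Finset.univ.filter (fun ρ => ρ.1 = i) with hKfin
  set Ifin : {x // x ∈ S} → Fin n → Finset ι :=
    fun s i => Finset.univ.filter (fun ρ => ρ.2 s = i) with hIfin
  have hPdecomp : ∀ i, P i = ⋃ ρ ∈ Kfin i, Rp ρ := by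
    intro i
    apply Set.Subset.antisymm
    · intro x hx
      obtain ⟨ρ, hρ⟩ := hcov x
      have hρ1 : ρ.1 = i := by
        by_contra hne
        exact (hd hne).ne_of_mem (hRsub1 ρ hρ) hx rfl
      have hmem : ρ ∈ Kfin i := by simp [hKfin, hρ1]
      exact Set.mem_biUnion hmem hρ
    · exact Set.iUnion₂_subset (fun ρ hρ => by
        have : ρ.1 = i := by simpa [hKfin] using hρ
        exact this ▸ hRsub1 ρ)
  have hVdecomp : ∀ (s : {x // x ∈ S}) i, (v ↑s) '' P i = ⋃ ρ ∈ Ifin s i, Rp ρ := by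
    intro s i
    apply Set.Subset.antisymm
    · intro x hx
      obtain ⟨ρ, hρ⟩ := hcov x
      have hρ1 : ρ.2 s = i := by
        by_contra hne
        have hdisj : Disjoint ((v ↑s) '' P (ρ.2 s)) ((v ↑s) '' P i) :=
          (Set.disjoint_image_iff (v ↑s).injective).mpr (hd hne)
        exact hdisj.ne_of_mem (hRsub2 ρ s hρ) hx rfl
      have hmem : ρ ∈ Ifin s i := by simp [hIfin, hρ1]
      exact Set.mem_biUnion hmem hρ
    · exact Set.iUnion₂_subset (fun ρ hρ => by
        have : ρ.2 s = i := by simpa [hIfin] using hρ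
        exact this ▸ hRsub2 ρ s)
  -- choose δ and apply the inductive hypothesis to the refined partition
  set N : ℕ := Fintype.card ι with hN
  set C : ℝ := ((N : ℝ) + 1)^2 with hC
  have hCpos : 0 < C := by positivity
  set δ : ℝ := ε / (6 * C) with hδdef
  have hδ : 0 < δ := by positivity
  obtain ⟨w, hwW, T, hTm, hTd, hTc, hTB⟩ := ih.fintype hδ Rp hRm hRd hRc
  have hwmp := hW w hwW
  -- the coarse partition on the w side
  set Q : Fin n → Set X := fun i => ⋃ ρ ∈ Kfin i, T ρ with hQdef
  have hQm : ∀ i, MeasurableSet (Q i) := fun i =>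
    MeasurableSet.biUnion (Kfin i).countable_toSet (fun ρ _ => hTm ρ)
  have hQd : Pairwise (Function.onFun Disjoint Q) := by
    intro i j hij
    rw [Function.onFun, Set.disjoint_left]
    rintro x hxi hxj
    simp only [hQdef, Set.mem_iUnion, exists_prop] at hxi hxj
    obtain ⟨ρ, hρK, hxρ⟩ := hxi
    obtain ⟨σ, hσK, hxσ⟩ := hxj
    have hρσ : ρ ≠ σ := by
      intro h; subst h
      exact hij ((by simpa [hKfin] using hρK : ρ.1 = i) ▸ (by simpa [hKfin] using hσK : ρ.1 = j))
    exact (hTd hρσ).ne_of_mem hxρ hxσ rfl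
  have hQc : (⋃ i, Q i) = Set.univ := by
    apply Set.eq_univ_iff_forall.mpr
    intro x
    have : x ∈ ⋃ ρ, T ρ := hTc ▸ Set.mem_univ x
    obtain ⟨ρ, hρ⟩ := Set.mem_iUnion.mp this
    have hmem : ρ ∈ Kfin ρ.1 := by simp [hKfin]
    exact Set.mem_iUnion.mpr ⟨ρ.1, Set.mem_biUnion hmem hρ⟩
  -- generic bound on sums of matrix entries
  have hcard : ∀ A : Finset ι, (A.card : ℝ) ≤ (N : ℝ) := by
    intro A; exact_mod_cast Nat.cast_le.mpr (A.card_le_univ.trans_eq (Finset.card_univ.trans hN.symm))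
  have hpair : ∀ g ∈ D, ∀ IA IB : Finset ι,
      |(∑ p ∈ IA ×ˢ IB, (μ (Rp p.1 ∩ (v g) '' Rp p.2)).toReal)
        - ∑ p ∈ IA ×ˢ IB, (μ (T p.1 ∩ (w g) '' T p.2)).toReal|
      ≤ (IA.card : ℝ) * (IB.card : ℝ) * δ := by
    intro g hg IA IB
    rw [← Finset.sum_sub_distrib]
    calc |∑ p ∈ IA ×ˢ IB, ((μ (Rp p.1 ∩ (v g) '' Rp p.2)).toReal
            - (μ (T p.1 ∩ (w g) '' T p.2)).toReal)|
        ≤ ∑ p ∈ IA ×ˢ IB, |(μ (Rp p.1 ∩ (v g) '' Rp p.2)).toReal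
            - (μ (T p.1 ∩ (w g) '' T p.2)).toReal| := Finset.abs_sum_le_sum_abs _ _
      _ ≤ ∑ _p ∈ IA ×ˢ IB, δ := Finset.sum_le_sum (fun p _ => (hTB g hg p.1 p.2).le)
      _ = ((IA ×ˢ IB).card : ℝ) * δ := by rw [Finset.sum_const, nsmul_eq_mul]
      _ = (IA.card : ℝ) * (IB.card : ℝ) * δ := by rw [Finset.card_product]; push_cast; ring
  refine ⟨w, hwW, Q, hQm, hQd, hQc, ?_⟩
  rintro g (hgD | ⟨s, hsS, h, hhD, rfl⟩) i j
  · -- easy case : g ∈ D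
    have eL : (μ (P i ∩ (v g) '' P j)).toReal
        = ∑ p ∈ Kfin i ×ˢ Kfin j, (μ (Rp p.1 ∩ (v g) '' Rp p.2)).toReal := by
      conv_lhs => rw [hPdecomp i, hPdecomp j]
      exact mreal_decomp μ Rp hRm hRd v hv g (Kfin i) (Kfin j)
    have eR : (μ (Q i ∩ (w g) '' Q j)).toReal
        = ∑ p ∈ Kfin i ×ˢ Kfin j, (μ (T p.1 ∩ (w g) '' T p.2)).toReal :=
      mreal_decomp μ T hTm hTd w hwmp g (Kfin i) (Kfin j)
    rw [eL, eR]
    calc |_ - _| ≤ ((Kfin i).card : ℝ) * ((Kfin j).card : ℝ) * δ := hpair g hgD _ _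
      _ ≤ (N : ℝ) * (N : ℝ) * δ := by
          apply mul_le_mul_of_nonneg_right _ hδ.le
          exact mul_le_mul (hcard _) (hcard _) (Nat.cast_nonneg _) (Nat.cast_nonneg _)
      _ < ε := by
          have h1 : (N:ℝ) * (N:ℝ) ≤ C := by rw [hC]; nlinarith [Nat.cast_nonneg (α := ℝ) N]
          have h2 : (N:ℝ) * (N:ℝ) * δ ≤ C * δ := mul_le_mul_of_nonneg_right h1 hδ.le
          have h3 : C * δ = ε / 6 := by rw [hδdef]; field_simp
          linarith
  · -- hard case : g = s * h with s ∈ S, h ∈ D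
    have hsinvS : s⁻¹ ∈ S := hSsym s hsS
    set s'' : {x // x ∈ S} := ⟨s⁻¹, hsinvS⟩ with hs''
    have hsinvD : s⁻¹ ∈ D := hSD hsinvS
    set I : Finset ι := Ifin s'' i with hI
    set K : Finset ι := Kfin i with hK
    set J : Finset ι := Kfin j with hJ
    set Av : Set X := (v s⁻¹) '' P i with hAv
    set Aw : Set X := (w s⁻¹) '' Q i with hAw
    have hAvdec : Av = ⋃ ρ ∈ I, Rp ρ := hVdecomp s'' i
    have hAwm : MeasurableSet Aw := meas_perm_image μ w hwmp _ (hQm i)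
    -- left side
    have eL : (μ (P i ∩ (v (s * h)) '' P j)).toReal = (μ (Av ∩ (v h) '' P j)).toReal := by
      rw [perm_image_mul, measure_shift μ v hv s (hm i) (meas_perm_image μ v hv h (hm j))]
    have eL2 : (μ (Av ∩ (v h) '' P j)).toReal
        = ∑ p ∈ I ×ˢ J, (μ (Rp p.1 ∩ (v h) '' Rp p.2)).toReal := by
      conv_lhs => rw [hAvdec, hPdecomp j]
      exact mreal_decomp μ Rp hRm hRd v hv h I J
    -- right side
    have eR : (μ (Q i ∩ (w (s * h)) '' Q j)).toReal = (μ (Aw ∩ (w h) '' Q j)).toReal := by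
      rw [perm_image_mul, measure_shift μ w hwmp s (hQm i) (meas_perm_image μ w hwmp h (hQm j))]
    have eB' : (μ ((⋃ ρ ∈ I, T ρ) ∩ (w h) '' Q j)).toReal
        = ∑ p ∈ I ×ˢ J, (μ (T p.1 ∩ (w h) '' T p.2)).toReal :=
      mreal_decomp μ T hTm hTd w hwmp h I J
    set U : Set X := ⋃ ρ ∈ I, T ρ with hU
    have hUm : MeasurableSet U := MeasurableSet.biUnion I.countable_toSet (fun ρ _ => hTm ρ)
    -- single-piece mass comparison
    have hmass : ∀ ρ : ι, |(μ (Rp ρ)).toReal - (μ (T ρ)).toReal| ≤ δ := by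
      intro ρ
      have := hTB 1 h1D ρ ρ
      rw [perm_image_one, perm_image_one, Set.inter_self, Set.inter_self] at this
      exact this.le
    -- m(T ρ ∩ Aw) = ∑_{σ ∈ K} entries of s⁻¹
    have hTAw : ∀ ρ : ι, (μ (T ρ ∩ Aw)).toReal
        = ∑ σ ∈ K, (μ (T ρ ∩ (w s⁻¹) '' T σ)).toReal := by
      intro ρ
      have h1 : T ρ = ⋃ ρ' ∈ ({ρ} : Finset ι), T ρ' := by simp
      have h2 : Aw = (w s⁻¹) '' ⋃ σ ∈ K, T σ := rfl
      conv_lhs => rw [h1, h2]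
      rw [mreal_decomp μ T hTm hTd w hwmp s⁻¹ ({ρ} : Finset ι) K,
        Finset.singleton_product, Finset.sum_map]
      rfl
    have hImem : ∀ ρ ∈ I, Rp ρ ⊆ Av := by
      intro ρ hρ
      have hρ2 : ρ.2 s'' = i := by
        have := hρ
        simp only [hI, hIfin, Finset.mem_filter] at this
        exact this.2
      have := hRsub2 ρ s''
      rw [hρ2] at this
      exact this
    have hRAv : ∀ ρ ∈ I, (μ (Rp ρ ∩ Av)).toReal = (μ (Rp ρ)).toReal := by
      intro ρ hρ
      rw [Set.inter_eq_left.mpr (hImem ρ hρ)]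
    have hRAvsum : ∀ ρ : ι, (μ (Rp ρ ∩ Av)).toReal
        = ∑ σ ∈ K, (μ (Rp ρ ∩ (v s⁻¹) '' Rp σ)).toReal := by
      intro ρ
      have h1 : Rp ρ = ⋃ ρ' ∈ ({ρ} : Finset ι), Rp ρ' := by simp
      have h2 : Av = (v s⁻¹) '' ⋃ σ ∈ K, Rp σ := by rw [hAv, hK, ← hPdecomp i]
      conv_lhs => rw [h1, h2]
      rw [mreal_decomp μ Rp hRm hRd v hv s⁻¹ ({ρ} : Finset ι) K,
        Finset.sum_product, Finset.sum_singleton]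
    -- row comparison for s⁻¹
    have hrow : ∀ ρ : ι,
        |∑ σ ∈ K, (μ (Rp ρ ∩ (v s⁻¹) '' Rp σ)).toReal
          - ∑ σ ∈ K, (μ (T ρ ∩ (w s⁻¹) '' T σ)).toReal| ≤ (N:ℝ) * δ := by
      intro ρ
      rw [← Finset.sum_sub_distrib]
      calc |∑ σ ∈ K, ((μ (Rp ρ ∩ (v s⁻¹) '' Rp σ)).toReal
              - (μ (T ρ ∩ (w s⁻¹) '' T σ)).toReal)|
          ≤ ∑ σ ∈ K, |(μ (Rp ρ ∩ (v s⁻¹) '' Rp σ)).toReal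
              - (μ (T ρ ∩ (w s⁻¹) '' T σ)).toReal| := Finset.abs_sum_le_sum_abs _ _
        _ ≤ ∑ _σ ∈ K, δ := Finset.sum_le_sum (fun σ _ => (hTB s⁻¹ hsinvD ρ σ).le)
        _ = (K.card : ℝ) * δ := by rw [Finset.sum_const, nsmul_eq_mul]
        _ ≤ (N:ℝ) * δ := mul_le_mul_of_nonneg_right (hcard K) hδ.le
    -- lower bound on m(T ρ ∩ Aw) for ρ ∈ I
    have hTAwlow : ∀ ρ ∈ I, (μ (Rp ρ)).toReal - (N:ℝ)*δ ≤ (μ (T ρ ∩ Aw)).toReal := by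
      intro ρ hρ
      have h1 := hrow ρ
      have h2 := hRAvsum ρ
      have h3 := hRAv ρ hρ
      have h4 := hTAw ρ
      rw [abs_le] at h1
      linarith [h1.1, h1.2]
    -- bound m(U \ Aw)
    have hUdiffeq : U \ Aw = ⋃ ρ ∈ I, (T ρ \ Aw) := by
      rw [hU]; ext x
      simp only [Set.mem_diff, Set.mem_iUnion, exists_prop]
      tauto
    have hUAw : (μ (U \ Aw)).toReal ≤ (N:ℝ) * (((N:ℝ)+1) * δ) := by
      have e1 : (μ (U \ Aw)).toReal = ∑ ρ ∈ I, (μ (T ρ \ Aw)).toReal := by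
        rw [hUdiffeq, mreal_biUnion]
        · exact fun ρ _ => (hTm ρ).diff hAwm
        · exact fun ρ hρ σ hσ hρσ =>
            Disjoint.mono Set.diff_subset Set.diff_subset (hTd hρσ)
      rw [e1]
      calc ∑ ρ ∈ I, (μ (T ρ \ Aw)).toReal ≤ ∑ _ρ ∈ I, ((N:ℝ)+1) * δ := by
            apply Finset.sum_le_sum
            intro ρ hρ
            have h5 : (μ (T ρ ∩ Aw)).toReal + (μ (T ρ \ Aw)).toReal = (μ (T ρ)).toReal :=
              mreal_inter_add_diff μ (T ρ) hAwm
            have h6 := hmass ρ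
            have h7 := hTAwlow ρ hρ
            rw [abs_le] at h6
            linarith [h6.1, h6.2]
        _ = (I.card : ℝ) * (((N:ℝ)+1) * δ) := by rw [Finset.sum_const, nsmul_eq_mul]
        _ ≤ (N:ℝ) * (((N:ℝ)+1) * δ) := by
            apply mul_le_mul_of_nonneg_right (hcard I) (by positivity)
    -- bound m(Aw \ U)
    have hQisum : (μ (Q i)).toReal = ∑ σ ∈ K, (μ (T σ)).toReal := by
      have : Q i = ⋃ σ ∈ K, T σ := rfl
      rw [this, mreal_biUnion]
      · exact fun σ _ => hTm σ
      · exact fun σ _ ρ _ h => hTd h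
    have hPisum : (μ (P i)).toReal = ∑ σ ∈ K, (μ (Rp σ)).toReal := by
      conv_lhs => rw [hPdecomp i]
      rw [mreal_biUnion]
      · exact fun σ _ => hRm σ
      · exact fun σ _ ρ _ h => hRd h
    have hQP : |(μ (Q i)).toReal - (μ (P i)).toReal| ≤ (N:ℝ) * δ := by
      rw [hQisum, hPisum, ← Finset.sum_sub_distrib]
      calc |∑ σ ∈ K, ((μ (T σ)).toReal - (μ (Rp σ)).toReal)|
          ≤ ∑ σ ∈ K, |(μ (T σ)).toReal - (μ (Rp σ)).toReal| := Finset.abs_sum_le_sum_abs _ _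
        _ ≤ ∑ _σ ∈ K, δ := Finset.sum_le_sum (fun σ _ => by
            rw [abs_sub_comm]; exact hmass σ)
        _ = (K.card : ℝ) * δ := by rw [Finset.sum_const, nsmul_eq_mul]
        _ ≤ (N:ℝ) * δ := mul_le_mul_of_nonneg_right (hcard K) hδ.le
    have hAwQi : (μ Aw).toReal = (μ (Q i)).toReal := by
      rw [hAw, measure_perm_image μ w hwmp _ (hQm i)]
    have hAvPi : (μ Av).toReal = (μ (P i)).toReal := by
      rw [hAv, measure_perm_image μ v hv _ (hm i)]
    have hAvsum : (μ Av).toReal = ∑ ρ ∈ I, (μ (Rp ρ)).toReal := by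
      rw [hAvdec, mreal_biUnion]
      · exact fun ρ _ => hRm ρ
      · exact fun ρ _ σ _ h => hRd h
    have hAwUeq : Aw ∩ U = ⋃ ρ ∈ I, (T ρ ∩ Aw) := by
      rw [hU]; ext x
      simp only [Set.mem_inter_iff, Set.mem_iUnion, exists_prop]
      tauto
    have hAwUsum : (μ (Aw ∩ U)).toReal = ∑ ρ ∈ I, (μ (T ρ ∩ Aw)).toReal := by
      rw [hAwUeq, mreal_biUnion]
      · exact fun ρ _ => (hTm ρ).inter hAwm
      · exact fun ρ _ σ _ h =>
          Disjoint.mono Set.inter_subset_left Set.inter_subset_left (hTd h)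
    have hAwU : (μ (Aw \ U)).toReal ≤ (N:ℝ) * δ + (N:ℝ) * ((N:ℝ) * δ) := by
      have h5 : (μ (Aw ∩ U)).toReal + (μ (Aw \ U)).toReal = (μ Aw).toReal :=
        mreal_inter_add_diff μ Aw hUm
      have h6 : ∑ ρ ∈ I, ((μ (Rp ρ)).toReal - (N:ℝ)*δ) ≤ ∑ ρ ∈ I, (μ (T ρ ∩ Aw)).toReal :=
        Finset.sum_le_sum (fun ρ hρ => hTAwlow ρ hρ)
      have h7 : ∑ ρ ∈ I, ((μ (Rp ρ)).toReal - (N:ℝ)*δ)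
          = (μ Av).toReal - (I.card : ℝ) * ((N:ℝ)*δ) := by
        rw [Finset.sum_sub_distrib, ← hAvsum, Finset.sum_const, nsmul_eq_mul]
      have h8 : (I.card : ℝ) * ((N:ℝ)*δ) ≤ (N:ℝ) * ((N:ℝ)*δ) :=
        mul_le_mul_of_nonneg_right (hcard I) (by positivity)
      rw [abs_le] at hQP
      rw [← hAwUsum] at h6
      linarith [h6, hQP.1, hQP.2]
    -- put the pieces together
    have hmain : |(μ (Aw ∩ (w h) '' Q j)).toReal - (μ (U ∩ (w h) '' Q j)).toReal|
        ≤ (μ (Aw \ U)).toReal + (μ (U \ Aw)).toReal :=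
      mreal_abs_inter_sub μ Aw U ((w h) '' Q j)
    have hIJ : |∑ p ∈ I ×ˢ J, (μ (Rp p.1 ∩ (v h) '' Rp p.2)).toReal
        - ∑ p ∈ I ×ˢ J, (μ (T p.1 ∩ (w h) '' T p.2)).toReal|
        ≤ (N:ℝ) * (N:ℝ) * δ := by
      calc |_ - _| ≤ (I.card : ℝ) * (J.card : ℝ) * δ := hpair h hhD I J
        _ ≤ (N:ℝ) * (N:ℝ) * δ := by
            apply mul_le_mul_of_nonneg_right _ hδ.le
            exact mul_le_mul (hcard _) (hcard _) (Nat.cast_nonneg _) (Nat.cast_nonneg _)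
    rw [eL, eL2, eR]
    have eB'' : (μ (U ∩ (w h) '' Q j)).toReal
        = ∑ p ∈ I ×ˢ J, (μ (T p.1 ∩ (w h) '' T p.2)).toReal := eB'
    have hNnn : (0:ℝ) ≤ (N:ℝ) := Nat.cast_nonneg N
    have hBD : |(∑ p ∈ I ×ˢ J, (μ (T p.1 ∩ (w h) '' T p.2)).toReal)
        - (μ (Aw ∩ (w h) '' Q j)).toReal|
        ≤ ((N:ℝ) * δ + (N:ℝ) * ((N:ℝ) * δ)) + (N:ℝ) * (((N:ℝ)+1) * δ) := by
      rw [← eB', abs_sub_comm]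
      exact hmain.trans (add_le_add hAwU hUAw)
    have hfinal : |∑ p ∈ I ×ˢ J, (μ (Rp p.1 ∩ (v h) '' Rp p.2)).toReal
        - (μ (Aw ∩ (w h) '' Q j)).toReal| ≤ (3*(N:ℝ)*(N:ℝ) + 2*(N:ℝ)) * δ := by
      have h9 := abs_sub_le (∑ p ∈ I ×ˢ J, (μ (Rp p.1 ∩ (v h) '' Rp p.2)).toReal)
        (∑ p ∈ I ×ˢ J, (μ (T p.1 ∩ (w h) '' T p.2)).toReal)
        ((μ (Aw ∩ (w h) '' Q j)).toReal)
      have := add_le_add hIJ hBD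
      nlinarith [h9]
    calc |∑ p ∈ I ×ˢ J, (μ (Rp p.1 ∩ (v h) '' Rp p.2)).toReal
        - (μ (Aw ∩ (w h) '' Q j)).toReal| ≤ (3*(N:ℝ)*(N:ℝ) + 2*(N:ℝ)) * δ := hfinal
      _ < ε := by
          have h10 : (3*(N:ℝ)*(N:ℝ) + 2*(N:ℝ)) ≤ 5*C := by rw [hC]; nlinarith
          have h11 : (3*(N:ℝ)*(N:ℝ) + 2*(N:ℝ)) * δ ≤ 5*C*δ := by
            apply mul_le_mul_of_nonneg_right h10 hδ.le
          have h12 : 5*C*δ = 5*ε/6 := by rw [hδdef]; field_simp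
          linarith

end

section
variable {G : Type*} [Group G]

def ballS (S : Finset G) : ℕ → Set G
  | 0 => insert 1 (S : Set G)
  | (L+1) => ballS S L ∪ {g | ∃ s ∈ S, ∃ h ∈ ballS S L, g = s * h}

lemma ballS_succ_subset (S : Finset G) (L : ℕ) : ballS S L ⊆ ballS S (L+1) :=
  Set.subset_union_left

lemma ballS_mono (S : Finset G) {L M : ℕ} (h : L ≤ M) : ballS S L ⊆ ballS S M := by
  induction M with
  | zero => rw [Nat.le_zero.mp h]
  | succ M ih =>
    rcases Nat.lt_or_ge L (M+1) with h' | h'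
    · exact (ih (Nat.lt_succ_iff.mp h')).trans (ballS_succ_subset S M)
    · rw [Nat.le_antisymm h h']

lemma one_mem_ballS (S : Finset G) (L : ℕ) : (1 : G) ∈ ballS S L :=
  ballS_mono S (Nat.zero_le L) (Set.mem_insert 1 _)

lemma subset_ballS (S : Finset G) (L : ℕ) : (S : Set G) ⊆ ballS S L :=
  fun s hs => ballS_mono S (Nat.zero_le L) (Set.mem_insert_iff.mpr (Or.inr hs))

lemma ballS_mul (S : Finset G) {a b : ℕ} {g h : G}
    (hg : g ∈ ballS S a) (hh : h ∈ ballS S b) : g * h ∈ ballS S (a + b + 1) := by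
  induction a generalizing g with
  | zero =>
    rcases hg with rfl | hg
    · simpa using ballS_mono S (by omega : b ≤ 0 + b + 1) hh
    · exact Or.inr ⟨g, hg, h, ballS_mono S (by omega : b ≤ 0 + b) hh, rfl⟩
  | succ a ih =>
    rcases hg with hg | ⟨s, hs, g', hg', rfl⟩
    · exact ballS_mono S (by omega : a + b + 1 ≤ a + 1 + b + 1) (ih hg)
    · exact Or.inr ⟨s, hs, g' * h, by simpa [Nat.add_right_comm] using ih hg', mul_assoc s g' h⟩

lemma ballS_inv (S : Finset G) (hSsym : ∀ s ∈ S, s⁻¹ ∈ S) {a : ℕ} {g : G}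
    (hg : g ∈ ballS S a) : g⁻¹ ∈ ballS S a := by
  induction a generalizing g with
  | zero =>
    rcases hg with rfl | hg
    · simp [ballS]
    · exact Set.mem_insert_iff.mpr (Or.inr (hSsym g hg))
  | succ a ih =>
    rcases hg with hg | ⟨s, hs, h, hh, rfl⟩
    · exact ballS_succ_subset S a (ih hg)
    · rw [mul_inv_rev]
      have h1 : h⁻¹ ∈ ballS S a := ih hh
      have h2 : s⁻¹ ∈ ballS S 0 := Set.mem_insert_iff.mpr (Or.inr (hSsym s hs))
      simpa using ballS_mul S h1 h2

lemma exists_ballS (S : Finset G) (hSsym : ∀ s ∈ S, s⁻¹ ∈ S)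
    (hSgen : Subgroup.closure (S : Set G) = ⊤) (g : G) : ∃ L, g ∈ ballS S L := by
  have hg : g ∈ Subgroup.closure (S : Set G) := hSgen ▸ Subgroup.mem_top g
  induction hg using Subgroup.closure_induction with
  | mem x hx => exact ⟨0, Set.mem_insert_iff.mpr (Or.inr hx)⟩
  | one => exact ⟨0, Set.mem_insert 1 _⟩
  | mul x y _ _ hx hy =>
    obtain ⟨a, ha⟩ := hx; obtain ⟨b, hb⟩ := hy
    exact ⟨a + b + 1, ballS_mul S ha hb⟩
  | inv x _ hx =>
    obtain ⟨a, ha⟩ := hx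
    exact ⟨a, ballS_inv S hSsym ha⟩
end
section
variable {G X : Type*} [Group G] [MeasurableSpace X]

theorem stmt12' (μ : Measure X) [IsProbabilityMeasure μ]
    (S : Finset G) (hSsym : ∀ s ∈ S, s⁻¹ ∈ S)
    (hSgen : Subgroup.closure (S : Set G) = ⊤)
    (v : G →* Equiv.Perm X) (hv : ∀ g, MeasurePreserving (v g) μ μ)
    (W : Set (G →* Equiv.Perm X)) (hW : ∀ w ∈ W, ∀ g, MeasurePreserving (w g) μ μ)
    (hyp : GoodOn μ v W (↑S : Set G)) :
    ∀ ε > (0 : ℝ), ∀ (n : ℕ) (P : Fin n → Set X),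
      (∀ i, MeasurableSet (P i)) → Pairwise (Function.onFun Disjoint P) →
      (⋃ i, P i) = Set.univ →
      ∀ F : Finset G,
      ∃ w ∈ W, ∃ Q : Fin n → Set X,
        (∀ i, MeasurableSet (Q i)) ∧ Pairwise (Function.onFun Disjoint Q) ∧
        (⋃ i, Q i) = Set.univ ∧
        ∀ g ∈ F, ∀ i j,
          |(μ (P i ∩ (v g) '' P j)).toReal - (μ (Q i ∩ (w g) '' Q j)).toReal| < ε := by
  intro ε hε n P hm hd hc F
  have hball : ∀ L, GoodOn μ v W (ballS S L) := by
    intro L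
    induction L with
    | zero =>
        have e : ballS S 0 = insert 1 (↑S : Set G) := rfl
        rw [e]
        exact goodOn_base hv hW hyp
    | succ L ihL =>
        have e : ballS S (L+1)
            = ballS S L ∪ {g | ∃ s ∈ S, ∃ h ∈ ballS S L, g = s * h} := rfl
        rw [e]
        exact goodOn_step hv hW hSsym (one_mem_ballS S L) (subset_ballS S L) ihL
  have hFL : ∃ L, ∀ g ∈ F, g ∈ ballS S L := by
    choose f hf using fun g : G => exists_ballS S hSsym hSgen g
    exact ⟨F.sup f, fun g hg => ballS_mono S (Finset.le_sup hg) (hf g)⟩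
  obtain ⟨L, hL⟩ := hFL
  obtain ⟨w, hwW, Q, h1, h2, h3, h4⟩ := hball L ε hε n P hm hd hc
  exact ⟨w, hwW, Q, h1, h2, h3, fun g hg i j => h4 g (hL g hg) i j⟩
end


open MeasureTheory in
theorem stmt12 {G X : Type*} [Group G] [MeasurableSpace X]
    (μ : Measure X) [IsProbabilityMeasure μ]
    (S : Finset G) (hSsym : ∀ s ∈ S, s⁻¹ ∈ S)
    (hSgen : Subgroup.closure (S : Set G) = ⊤)
    (v : G →* Equiv.Perm X) (hv : ∀ g, MeasurePreserving (v g) μ μ)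
    (W : Set (G →* Equiv.Perm X)) (hW : ∀ w ∈ W, ∀ g, MeasurePreserving (w g) μ μ)
    (hyp : ∀ ε > (0 : ℝ), ∀ (n : ℕ) (P : Fin n → Set X),
      (∀ i, MeasurableSet (P i)) → Pairwise (Function.onFun Disjoint P) →
      (⋃ i, P i) = Set.univ →
      ∃ w ∈ W, ∃ Q : Fin n → Set X,
        (∀ i, MeasurableSet (Q i)) ∧ Pairwise (Function.onFun Disjoint Q) ∧
        (⋃ i, Q i) = Set.univ ∧
        ∀ s ∈ S, ∀ i j,
          |(μ (P i ∩ (v s) '' P j)).toReal - (μ (Q i ∩ (w s) '' Q j)).toReal| < ε) :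
    ∀ ε > (0 : ℝ), ∀ (n : ℕ) (P : Fin n → Set X),
      (∀ i, MeasurableSet (P i)) → Pairwise (Function.onFun Disjoint P) →
      (⋃ i, P i) = Set.univ →
      ∀ F : Finset G,
      ∃ w ∈ W, ∃ Q : Fin n → Set X,
        (∀ i, MeasurableSet (Q i)) ∧ Pairwise (Function.onFun Disjoint Q) ∧
        (⋃ i, Q i) = Set.univ ∧
        ∀ g ∈ F, ∀ i j,
          |(μ (P i ∩ (v g) '' P j)).toReal - (μ (Q i ∩ (w g) '' Q j)).toReal| < ε := by
  apply stmt12' μ S hSsym hSgen v hv W hW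
  intro ε hε n P hm hd hc
  obtain ⟨w, hwW, Q, h1, h2, h3, h4⟩ := hyp ε hε n P hm hd hc
  exact ⟨w, hwW, Q, h1, h2, h3, fun g hg i j => h4 g hg i j⟩
end

section
/- Let G be a countably generated free group with free generating set {s₁, s₂, …}, let G_n be the subgroup generated by {s₁,…,s_n}, and suppose that for every finitely generated free group the orbit-equivalence class of any essentially free pmp action is weakly dense in the space of actions. Then for any essentially free a ∈ A(G,X,μ), any b ∈ A(G,X,μ), any finite F ⊂ G_n, finite partition {P₁,…,Pₙ} and ε > 0, there exists a' ∈ A(G,X,μ) orbit-equivalent to a and a partition {Q₁,…,Qₙ} with |μ(P_i ∩ b_g P_j) − μ(Q_i ∩ a'_g Q_j)| < ε for all g ∈ F; consequently the orbit-equivalence class of a is dense in A(G,X,μ). -/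
open MeasureTheory in
theorem stmt17 {X : Type*} [MeasurableSpace X] [StandardBorelSpace X]
    (μ : Measure X) [IsProbabilityMeasure μ] [NullSingletonClass μ]
    -- density of orbit-equivalence classes for finitely generated free groups:
    (hfg : ∀ (m : ℕ) (a b : FreeGroup (Fin m) →* Equiv.Perm X),
      (∀ g, MeasurePreserving (a g) μ μ) → (∀ g, MeasurePreserving (b g) μ μ) →
      (∀ᵐ x ∂μ, ∀ g, g ≠ 1 → a g x ≠ x) →
      ∀ ε > (0 : ℝ), ∀ (n : ℕ) (P : Fin n → Set X),
        (∀ i, MeasurableSet (P i)) → Pairwise (Function.onFun Disjoint P) →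
        (⋃ i, P i) = Set.univ →
        ∀ F : Finset (FreeGroup (Fin m)),
        ∃ a' : FreeGroup (Fin m) →* Equiv.Perm X,
          (∀ g, MeasurePreserving (a' g) μ μ) ∧
          (∃ T : Equiv.Perm X, MeasurePreserving T μ μ ∧ MeasurePreserving T.symm μ μ ∧
            ∀ᵐ x ∂μ, T '' {y | ∃ g, a g x = y} = {y | ∃ g, a' g (T x) = y}) ∧
          ∃ Q : Fin n → Set X,
            (∀ i, MeasurableSet (Q i)) ∧ Pairwise (Function.onFun Disjoint Q) ∧
            (⋃ i, Q i) = Set.univ ∧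
            ∀ g ∈ F, ∀ i j,
              |(μ (P i ∩ (b g) '' P j)).toReal - (μ (Q i ∩ (a' g) '' Q j)).toReal| < ε)
    (a b : FreeGroup ℕ →* Equiv.Perm X)
    (ha : ∀ g, MeasurePreserving (a g) μ μ) (hb : ∀ g, MeasurePreserving (b g) μ μ)
    (hfree : ∀ᵐ x ∂μ, ∀ g, g ≠ 1 → a g x ≠ x)
    (nn : ℕ) (F : Finset (FreeGroup ℕ))
    -- `F` is contained in the subgroup `G_nn` generated by the first `nn` free generators
    (hF : ∀ g ∈ F, g ∈ Subgroup.closure (FreeGroup.of '' {i : ℕ | i < nn}))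
    (ε : ℝ) (hε : 0 < ε)
    (n : ℕ) (P : Fin n → Set X)
    (hPm : ∀ i, MeasurableSet (P i)) (hPd : Pairwise (Function.onFun Disjoint P))
    (hPc : (⋃ i, P i) = Set.univ) :
    ∃ a' : FreeGroup ℕ →* Equiv.Perm X,
      (∀ g, MeasurePreserving (a' g) μ μ) ∧
      (∃ T : Equiv.Perm X, MeasurePreserving T μ μ ∧ MeasurePreserving T.symm μ μ ∧
        ∀ᵐ x ∂μ, T '' {y | ∃ g, a g x = y} = {y | ∃ g, a' g (T x) = y}) ∧
      ∃ Q : Fin n → Set X,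
        (∀ i, MeasurableSet (Q i)) ∧ Pairwise (Function.onFun Disjoint Q) ∧
        (⋃ i, Q i) = Set.univ ∧
        ∀ g ∈ F, ∀ i j,
          |(μ (P i ∩ (b g) '' P j)).toReal - (μ (Q i ∩ (a' g) '' Q j)).toReal| < ε := by
  classical
  have : Countable (FreeGroup ℕ) :=
    Function.Injective.countable (FreeGroup.toWord_injective (α := ℕ))
  -- the embedding hom from FreeGroup (Fin nn) to FreeGroup ℕ
  set φ : FreeGroup (Fin nn) →* FreeGroup ℕ :=
    FreeGroup.lift (fun j : Fin nn => FreeGroup.of (j : ℕ)) with hφdef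
  have hφof : ∀ j : Fin nn, φ (FreeGroup.of j) = FreeGroup.of (j : ℕ) :=
    fun j => FreeGroup.lift_apply_of
  -- retraction showing φ is injective
  have hrφ : ∀ g, (FreeGroup.lift (fun i : ℕ =>
      if h : i < nn then FreeGroup.of (⟨i, h⟩ : Fin nn) else 1)) (φ g) = g := by
    intro g
    have hcomp : (FreeGroup.lift (fun i : ℕ =>
        if h : i < nn then FreeGroup.of (⟨i, h⟩ : Fin nn) else 1)).comp φ
        = MonoidHom.id (FreeGroup (Fin nn)) := by
      apply FreeGroup.ext_hom
      intro j
      simp [hφof, j.isLt]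
    calc (FreeGroup.lift (fun i : ℕ =>
        if h : i < nn then FreeGroup.of (⟨i, h⟩ : Fin nn) else 1)) (φ g)
        = ((FreeGroup.lift (fun i : ℕ =>
          if h : i < nn then FreeGroup.of (⟨i, h⟩ : Fin nn) else 1)).comp φ) g := rfl
      _ = g := by rw [hcomp]; rfl
  have hφinj : Function.Injective φ := Function.LeftInverse.injective hrφ
  -- preimages of elements of F
  have hFpre : ∀ g ∈ F, ∃ g'', φ g'' = g := by
    intro g hg
    have h1 : Subgroup.closure (FreeGroup.of '' {i : ℕ | i < nn}) ≤ φ.range := by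
      rw [Subgroup.closure_le]
      rintro _ ⟨i, hi, rfl⟩
      exact ⟨FreeGroup.of ⟨i, hi⟩, hφof _⟩
    exact h1 (hF g hg)
  set ψ : FreeGroup ℕ → FreeGroup (Fin nn) :=
    fun g => if h : ∃ g'', φ g'' = g then h.choose else 1 with hψdef
  have hψF : ∀ g ∈ F, φ (ψ g) = g := by
    intro g hg
    have h := hFpre g hg
    simp only [hψdef, dif_pos h]
    exact h.choose_spec
  -- apply hfg to the pulled-back actions
  have hfreeφ : ∀ᵐ x ∂μ, ∀ g, g ≠ 1 → (a.comp φ) g x ≠ x := by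
    filter_upwards [hfree] with x hx g hg
    exact hx (φ g) (fun h1 => hg (hφinj (h1.trans (map_one φ).symm)))
  obtain ⟨a'', ha'', ⟨T, hT, hTs, horb⟩, Q, hQm, hQd, hQc, hQest⟩ :=
    hfg nn (a.comp φ) (b.comp φ) (fun g => ha (φ g)) (fun g => hb (φ g)) hfreeφ
      ε hε n P hPm hPd hPc (F.image ψ)
  -- build the extension a'
  set f : ℕ → Equiv.Perm X := fun i =>
    if h : i < nn then a'' (FreeGroup.of ⟨i, h⟩)
    else T * a (FreeGroup.of i) * T⁻¹ with hfdef
  set a' : FreeGroup ℕ →* Equiv.Perm X := FreeGroup.lift f with ha'def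
  have ha'of : ∀ i, a' (FreeGroup.of i) = f i := fun i => FreeGroup.lift_apply_of
  have ha'φ : ∀ g, a' (φ g) = a'' g := by
    have hcomp : a'.comp φ = a'' := by
      apply FreeGroup.ext_hom
      intro j
      rw [MonoidHom.comp_apply, hφof, ha'of]
      simp [hfdef, j.isLt]
    intro g; rw [← hcomp]; rfl
  -- measure preservation of a'
  have hmp : ∀ g, MeasurePreserving (a' g) μ μ := by
    have hfi : ∀ i, MeasurePreserving (f i) μ μ := by
      intro i
      by_cases h : i < nn
      · simpa [hfdef, h] using ha'' (FreeGroup.of ⟨i, h⟩)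
      · have : ⇑(f i) = ⇑T ∘ ⇑(a (FreeGroup.of i)) ∘ ⇑T.symm := by
          simp [hfdef, h, Equiv.Perm.coe_mul]
          rfl
        rw [this]
        exact hT.comp ((ha _).comp hTs)
    intro g
    induction g using FreeGroup.induction_on with
    | C1 => simpa using MeasurePreserving.id μ
    | of i => rw [show (FreeGroup.of i : FreeGroup ℕ) = FreeGroup.of i from rfl, ha'of]; exact hfi i
    | inv_of i _ =>
      rw [show (FreeGroup.of i : FreeGroup ℕ) = FreeGroup.of i from rfl, map_inv, ha'of]
      by_cases h : i < nn
      · have : (f i)⁻¹ = a'' (FreeGroup.of ⟨i, h⟩)⁻¹ := by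
          simp [hfdef, h]
        rw [this]; exact ha'' _
      · have : ⇑(f i)⁻¹ = ⇑T ∘ ⇑(a (FreeGroup.of i)⁻¹) ∘ ⇑T.symm := by
          simp [hfdef, h, mul_inv_rev, mul_assoc, Equiv.Perm.coe_mul, map_inv]
        rw [this]
        exact hT.comp ((ha _).comp hTs)
    | mul g₁ g₂ h₁ h₂ =>
      rw [map_mul]
      have : ⇑(a' g₁ * a' g₂) = ⇑(a' g₁) ∘ ⇑(a' g₂) := Equiv.Perm.coe_mul _ _
      rw [this]
      exact h₁.comp h₂
  -- a.e. sets
  set E₀ : Set X :=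
    {x | T '' {y | ∃ g, (a.comp φ) g x = y} = {y | ∃ g, a'' g (T x) = y}} with hE₀def
  have hE₀ : ∀ᵐ x ∂μ, x ∈ E₀ := horb
  set E : Set X := {x | ∀ g : FreeGroup ℕ, a g x ∈ E₀} with hEdef
  have hE : ∀ᵐ x ∂μ, x ∈ E := by
    have : ∀ g : FreeGroup ℕ, ∀ᵐ x ∂μ, a g x ∈ E₀ := by
      intro g
      have h0 : μ {x | ¬ x ∈ E₀} = 0 := ae_iff.mp hE₀
      exact ae_iff.mpr ((ha g).quasiMeasurePreserving.preimage_null h0)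
    exact ae_all_iff.mpr this
  have hE_sub : ∀ x ∈ E, x ∈ E₀ := by
    intro x hx
    have := hx 1
    simpa using this
  have hE_inv : ∀ x ∈ E, ∀ g, a g x ∈ E := by
    intro x hx g g'
    have := hx (g' * g)
    rwa [map_mul, Equiv.Perm.mul_apply] at this
  -- key lemmas from the orbit equality on E₀
  have keyA : ∀ h : FreeGroup (Fin nn), ∀ x ∈ E₀,
      ∃ g', a' g' (T x) = T (a (φ h) x) := by
    intro h x hx
    have hmem : T (a (φ h) x) ∈ T '' {y | ∃ g, (a.comp φ) g x = y} :=
      ⟨a (φ h) x, ⟨h, rfl⟩, rfl⟩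
    rw [hx] at hmem
    obtain ⟨g'', hg''⟩ := hmem
    exact ⟨φ g'', by rw [ha'φ g'']; exact hg''⟩
  have keyB : ∀ h : FreeGroup (Fin nn), ∀ x ∈ E₀,
      ∃ g, T (a g x) = a'' h (T x) := by
    intro h x hx
    have hmem : a'' h (T x) ∈ {y | ∃ g, a'' g (T x) = y} := ⟨h, rfl⟩
    rw [← hx] at hmem
    obtain ⟨y, ⟨g'', hy⟩, hTy⟩ := hmem
    exact ⟨φ g'', by rw [show a (φ g'') x = y from hy]; exact hTy⟩
  -- Claim A
  have claimA : ∀ g : FreeGroup ℕ, ∀ x ∈ E, ∃ g', a' g' (T x) = T (a g x) := by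
    intro g
    induction g using FreeGroup.induction_on with
    | C1 => intro x _; exact ⟨1, by simp⟩
    | of i =>
      intro x hx
      rw [show (FreeGroup.of i : FreeGroup ℕ) = FreeGroup.of i from rfl]
      by_cases h : i < nn
      · have heq : FreeGroup.of i = φ (FreeGroup.of (⟨i, h⟩ : Fin nn)) := by
          rw [hφof]
        rw [heq]
        exact keyA _ x (hE_sub x hx)
      · refine ⟨FreeGroup.of i, ?_⟩
        rw [ha'of]
        simp [hfdef, h, Equiv.Perm.mul_apply]
    | inv_of i _ =>
      intro x hx
      rw [show (FreeGroup.of i : FreeGroup ℕ) = FreeGroup.of i from rfl]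
      by_cases h : i < nn
      · have heq : (FreeGroup.of i)⁻¹ = φ ((FreeGroup.of (⟨i, h⟩ : Fin nn))⁻¹) := by
          rw [map_inv, hφof]
        rw [heq]
        exact keyA _ x (hE_sub x hx)
      · refine ⟨(FreeGroup.of i)⁻¹, ?_⟩
        rw [map_inv, map_inv, ha'of]
        have : (f i)⁻¹ = T * (a (FreeGroup.of i))⁻¹ * T⁻¹ := by
          simp [hfdef, h, mul_inv_rev, mul_assoc]
        rw [this]
        simp [Equiv.Perm.mul_apply]
    | mul g₁ g₂ ih₁ ih₂ =>
      intro x hx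
      obtain ⟨g₂', h2⟩ := ih₂ x hx
      obtain ⟨g₁', h1⟩ := ih₁ (a g₂ x) (hE_inv x hx g₂)
      refine ⟨g₁' * g₂', ?_⟩
      rw [map_mul, map_mul, Equiv.Perm.mul_apply, Equiv.Perm.mul_apply, h2, h1]
  -- Claim B
  have claimB : ∀ g' : FreeGroup ℕ, ∀ x ∈ E, ∃ g, T (a g x) = a' g' (T x) := by
    intro g'
    induction g' using FreeGroup.induction_on with
    | C1 => intro x _; exact ⟨1, by simp⟩
    | of i =>
      intro x hx
      rw [show (FreeGroup.of i : FreeGroup ℕ) = FreeGroup.of i from rfl]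
      by_cases h : i < nn
      · have heq : a' (FreeGroup.of i) = a'' (FreeGroup.of (⟨i, h⟩ : Fin nn)) := by
          rw [ha'of]; simp [hfdef, h]
        rw [heq]
        exact keyB _ x (hE_sub x hx)
      · refine ⟨FreeGroup.of i, ?_⟩
        rw [ha'of]
        simp [hfdef, h, Equiv.Perm.mul_apply]
    | inv_of i _ =>
      intro x hx
      rw [show (FreeGroup.of i : FreeGroup ℕ) = FreeGroup.of i from rfl]
      by_cases h : i < nn
      · have heq : a' (FreeGroup.of i)⁻¹ = a'' ((FreeGroup.of (⟨i, h⟩ : Fin nn))⁻¹) := by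
          rw [map_inv, map_inv, ha'of]; simp [hfdef, h]
        rw [heq]
        exact keyB _ x (hE_sub x hx)
      · refine ⟨(FreeGroup.of i)⁻¹, ?_⟩
        rw [map_inv, map_inv, ha'of]
        have : (f i)⁻¹ = T * (a (FreeGroup.of i))⁻¹ * T⁻¹ := by
          simp [hfdef, h, mul_inv_rev, mul_assoc]
        rw [this]
        simp [Equiv.Perm.mul_apply]
    | mul g₁' g₂' ih₁ ih₂ =>
      intro x hx
      obtain ⟨g₂, h2⟩ := ih₂ x hx
      obtain ⟨g₁, h1⟩ := ih₁ (a g₂ x) (hE_inv x hx g₂)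
      refine ⟨g₁ * g₂, ?_⟩
      rw [map_mul, map_mul, Equiv.Perm.mul_apply, Equiv.Perm.mul_apply, ← h2, h1, h2]
  -- assemble
  refine ⟨a', hmp, ⟨T, hT, hTs, ?_⟩, Q, hQm, hQd, hQc, ?_⟩
  · filter_upwards [hE] with x hx
    ext y
    constructor
    · rintro ⟨z, ⟨g, rfl⟩, rfl⟩
      obtain ⟨g', hg'⟩ := claimA g x hx
      exact ⟨g', hg'⟩
    · rintro ⟨g', hy⟩
      obtain ⟨g, hg⟩ := claimB g' x hx
      exact ⟨a g x, ⟨g, rfl⟩, hg.trans hy⟩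
  · intro g hg i j
    have h1 : φ (ψ g) = g := hψF g hg
    have h2 := hQest (ψ g) (Finset.mem_image_of_mem ψ hg) i j
    have hbg : (b.comp φ) (ψ g) = b g := by rw [MonoidHom.comp_apply, h1]
    have hag : a'' (ψ g) = a' g := by rw [← ha'φ, h1]
    rwa [hbg, hag] at h2
end
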